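/- arXiv:2102.09743 — 7 statements merged into one kernel-verified Lean document; each statement's English description precedes it below -/
import Mathlib

section
/- Let f'_m : ℝ^d → ℝ (m = 1,…,M) be twice continuously differentiable, L'-smooth and μ'-strongly convex, let λ ≥ 0 and Λ ≥ 3λ/(2μ'). Define f_m(w,β_m) := Λ f'_m(M^{-1/2}w) + f'_m(β_m) + (λ/2)‖β_m − M^{-1/2}w‖² and F_MT2(w,β) := (1/M)Σ_{m=1}^M f_m(w,β_m) for w, β_m ∈ ℝ^d. Then F_MT2 is jointly (λ/(2M))-strongly convex, and each f_m is jointly convex, ((ΛL'+λ)/M)-smooth w.r.t. w and (L'+λ)-smooth w.r.t. β_m. Moreover, if f'_m = (1/n)Σ_{j=1}^n f'_{m,j} with each f'_{m,j} convex and ℒ'-smooth, then each f_{m,j}(w,β_m) := Λ f'_{m,j}(M^{-1/2}w) + f'_{m,j}(β_m) + (λ/2)‖β_m − M^{-1/2}w‖² is jointly convex, ((Λℒ'+λ)/M)-smooth w.r.t. w and (ℒ'+λ)-smooth w.r.t. β_m. -/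
open Real Finset
noncomputable section

/-- `Vec d` is the Euclidean space `ℝ^d`. -/
abbrev Vec (d : ℕ) : Type := EuclideanSpace ℝ (Fin d)

open InnerProductSpace

section Helpers

local notation "⟪" x ", " y "⟫" => @inner ℝ _ _ x y

lemma myConvexCongr {E : Type*} [AddCommMonoid E] [Module ℝ E] {s : Set E} {f g : E → ℝ}
    (hf : ConvexOn ℝ s f) (h : ∀ x, f x = g x) : ConvexOn ℝ s g := (funext h : f = g) ▸ hf

lemma convexOn_normSq {E : Type*} [NormedAddCommGroup E] [InnerProductSpace ℝ E] :
    ConvexOn ℝ Set.univ (fun x : E => ‖x‖ ^ 2) := by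
  refine ⟨convex_univ, fun x _ y _ a b ha hb hab => ?_⟩
  have h := convexOn_univ_norm.2 (Set.mem_univ x) (Set.mem_univ y) ha hb hab
  simp only [smul_eq_mul] at h ⊢
  nlinarith [norm_nonneg (a • x + b • y), norm_nonneg x, norm_nonneg y,
    sq_nonneg (‖x‖ - ‖y‖), mul_nonneg ha hb, mul_nonneg (mul_nonneg ha hb) (sq_nonneg (‖x‖ - ‖y‖))]

lemma convexOn_smul_comp {E F : Type*} [AddCommGroup E] [Module ℝ E]
    [AddCommGroup F] [Module ℝ F] (c : ℝ) {f : F → ℝ}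
    (hf : ConvexOn ℝ Set.univ f) (g : E →ₗ[ℝ] F) (hc : 0 ≤ c) :
    ConvexOn ℝ Set.univ (fun x : E => c * f (g x)) := by
  have h := (hf.comp_linearMap g).smul hc
  rw [Set.preimage_univ] at h
  exact myConvexCongr h fun x => by simp

lemma convexOn_finsum {ι E : Type*} [AddCommMonoid E] [Module ℝ E] (t : Finset ι)
    (f : ι → E → ℝ) (h : ∀ i ∈ t, ConvexOn ℝ Set.univ (f i)) :
    ConvexOn ℝ Set.univ (fun x => ∑ i ∈ t, f i x) := by
  classical
  induction t using Finset.induction_on with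
  | empty => simpa using convexOn_const (0 : ℝ) convex_univ
  | @insert i t hnm ih =>
    refine myConvexCongr (((h i (Finset.mem_insert_self i t)).add
      (ih fun j hj => h j (Finset.mem_insert_of_mem hj)))) fun x => ?_
    simp [Finset.sum_insert hnm]

lemma convexOn_joint {E : Type*} [NormedAddCommGroup E] [InnerProductSpace ℝ E]
    {f g : E → ℝ} (hf : ConvexOn ℝ Set.univ f) (hg : ConvexOn ℝ Set.univ g)
    {c κ : ℝ} (hc : 0 ≤ c) (hκ : 0 ≤ κ) (s : ℝ) :
    ConvexOn ℝ Set.univ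
      (fun p : E × E => c * f (s • p.1) + g p.2 + κ / 2 * ‖p.2 - s • p.1‖ ^ 2) := by
  have h1 : ConvexOn ℝ Set.univ (fun p : E × E => c * f (s • p.1)) :=
    convexOn_smul_comp c hf (s • LinearMap.fst ℝ E E) hc
  have h2 : ConvexOn ℝ Set.univ (fun p : E × E => g p.2) := by
    have := hg.comp_linearMap (LinearMap.snd ℝ E E)
    rw [Set.preimage_univ] at this
    exact myConvexCongr this fun p => rfl
  have h3 : ConvexOn ℝ Set.univ (fun p : E × E => κ / 2 * ‖p.2 - s • p.1‖ ^ 2) :=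
    convexOn_smul_comp (κ / 2) convexOn_normSq
      (LinearMap.snd ℝ E E - s • LinearMap.fst ℝ E E) (by positivity)
  exact (h1.add h2).add h3

section Grad
variable {E : Type*} [NormedAddCommGroup E] [InnerProductSpace ℝ E] [CompleteSpace E]

lemma gradient_inner_eq (f : E → ℝ) (z y : E) : ⟪gradient f z, y⟫ = fderiv ℝ f z y :=
  InnerProductSpace.toDual_symm_apply

lemma hasGradientAt_w (f : E → ℝ) (hf : Differentiable ℝ f) (c C κ s : ℝ) (b u : E) :
    HasGradientAt (fun x : E => c * f (s • x) + C + κ / 2 * ‖b - s • x‖ ^ 2)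
      ((c * s) • gradient f (s • u) + (κ * s) • (s • u - b)) u := by
  have hS : HasFDerivAt (fun x : E => s • x) (s • ContinuousLinearMap.id ℝ E) u := by
    exact (hasFDerivAt_id u).const_smul s
  have h1 : HasFDerivAt (fun x : E => f (s • x))
      ((fderiv ℝ f (s • u)).comp (s • ContinuousLinearMap.id ℝ E)) u :=
    (hf (s • u)).hasFDerivAt.comp u hS
  have h2 : HasFDerivAt (fun x : E => b - s • x)
      ((0 : E →L[ℝ] E) - s • ContinuousLinearMap.id ℝ E) u :=
    (hasFDerivAt_const b u).sub hS
  have h3 := h2.norm_sq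
  have total := ((h1.const_mul c).add_const C).add (h3.const_mul (κ / 2))
  have hval : (toDual ℝ E) ((c * s) • gradient f (s • u) + (κ * s) • (s • u - b)) =
      (c • ((fderiv ℝ f (s • u)).comp (s • ContinuousLinearMap.id ℝ E)) +
        (κ / 2) • (2 • (innerSL ℝ (b - s • u)).comp
          ((0 : E →L[ℝ] E) - s • ContinuousLinearMap.id ℝ E))) := by
    ext y
    simp [toDual_apply_apply, -inner_gradient_left, inner_add_left, real_inner_smul_left, ← gradient_inner_eq,
      real_inner_smul_right, inner_sub_left, inner_sub_right,
      ContinuousLinearMap.comp_apply, two_smul]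
    ring
  exact hasGradientAt_iff_hasFDerivAt.mpr (by rw [hval]; exact total)

lemma hasGradientAt_b (f : E → ℝ) (hf : Differentiable ℝ f) (C κ : ℝ) (a u : E) :
    HasGradientAt (fun x : E => C + f x + κ / 2 * ‖x - a‖ ^ 2)
      (gradient f u + κ • (u - a)) u := by
  have h2 : HasFDerivAt (fun x : E => x - a)
      (ContinuousLinearMap.id ℝ E - (0 : E →L[ℝ] E)) u :=
    (hasFDerivAt_id u).sub (hasFDerivAt_const a u)
  have h3 := h2.norm_sq
  have total := ((hasFDerivAt_const C u).add (hf u).hasFDerivAt).add (h3.const_mul (κ / 2))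
  have hval : (toDual ℝ E) (gradient f u + κ • (u - a)) =
      ((0 : E →L[ℝ] ℝ) + fderiv ℝ f u +
        (κ / 2) • (2 • (innerSL ℝ (u - a)).comp
          (ContinuousLinearMap.id ℝ E - (0 : E →L[ℝ] E)))) := by
    ext y
    simp [toDual_apply_apply, -inner_gradient_left, inner_add_left, real_inner_smul_left, ← gradient_inner_eq,
      real_inner_smul_right, inner_sub_left, inner_sub_right,
      ContinuousLinearMap.comp_apply, two_smul]
    ring
  exact hasGradientAt_iff_hasFDerivAt.mpr (by rw [hval]; exact total)

lemma lipschitz_grad_w (f : E → ℝ) (hf : Differentiable ℝ f) {L : ℝ}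
    (hL : ∀ x y, ‖gradient f x - gradient f y‖ ≤ L * ‖x - y‖)
    {c κ s : ℝ} (hc : 0 ≤ c) (hκ : 0 ≤ κ) (hs : 0 ≤ s) (C : ℝ) (b w w' : E) :
    ‖gradient (fun x : E => c * f (s • x) + C + κ / 2 * ‖b - s • x‖ ^ 2) w -
      gradient (fun x : E => c * f (s • x) + C + κ / 2 * ‖b - s • x‖ ^ 2) w'‖
      ≤ (c * L + κ) * s ^ 2 * ‖w - w'‖ := by
  rw [(hasGradientAt_w f hf c C κ s b w).gradient,
    (hasGradientAt_w f hf c C κ s b w').gradient]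
  have hdiff : ((c * s) • gradient f (s • w) + (κ * s) • (s • w - b)) -
      ((c * s) • gradient f (s • w') + (κ * s) • (s • w' - b)) =
      (c * s) • (gradient f (s • w) - gradient f (s • w')) + (κ * s ^ 2) • (w - w') := by
    rw [pow_two]; module
  rw [hdiff]
  have h1 := hL (s • w) (s • w')
  rw [← smul_sub, norm_smul, Real.norm_eq_abs, abs_of_nonneg hs] at h1
  have e1 : ‖(c * s) • (gradient f (s • w) - gradient f (s • w'))‖
      = (c * s) * ‖gradient f (s • w) - gradient f (s • w')‖ := by
    rw [norm_smul, Real.norm_eq_abs, abs_of_nonneg (mul_nonneg hc hs)]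
  have e2 : ‖(κ * s ^ 2) • (w - w')‖ = (κ * s ^ 2) * ‖w - w'‖ := by
    rw [norm_smul, Real.norm_eq_abs, abs_of_nonneg (by positivity)]
  calc ‖(c * s) • (gradient f (s • w) - gradient f (s • w')) + (κ * s ^ 2) • (w - w')‖
      ≤ ‖(c * s) • (gradient f (s • w) - gradient f (s • w'))‖ +
        ‖(κ * s ^ 2) • (w - w')‖ := norm_add_le _ _
    _ ≤ (c * s) * (L * (s * ‖w - w'‖)) + (κ * s ^ 2) * ‖w - w'‖ := by
        rw [e1, e2]
        have := mul_le_mul_of_nonneg_left h1 (mul_nonneg hc hs)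
        linarith
    _ = (c * L + κ) * s ^ 2 * ‖w - w'‖ := by ring

lemma lipschitz_grad_b (f : E → ℝ) (hf : Differentiable ℝ f) {L : ℝ}
    (hL : ∀ x y, ‖gradient f x - gradient f y‖ ≤ L * ‖x - y‖)
    {κ : ℝ} (hκ : 0 ≤ κ) (C : ℝ) (a β β' : E) :
    ‖gradient (fun x : E => C + f x + κ / 2 * ‖x - a‖ ^ 2) β -
      gradient (fun x : E => C + f x + κ / 2 * ‖x - a‖ ^ 2) β'‖
      ≤ (L + κ) * ‖β - β'‖ := by
  rw [(hasGradientAt_b f hf C κ a β).gradient, (hasGradientAt_b f hf C κ a β').gradient]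
  have hdiff : (gradient f β + κ • (β - a)) - (gradient f β' + κ • (β' - a)) =
      (gradient f β - gradient f β') + κ • (β - β') := by module
  rw [hdiff]
  have h1 := hL β β'
  have e2 : ‖κ • (β - β')‖ = κ * ‖β - β'‖ := by
    rw [norm_smul, Real.norm_eq_abs, abs_of_nonneg hκ]
  calc ‖(gradient f β - gradient f β') + κ • (β - β')‖
      ≤ ‖gradient f β - gradient f β'‖ + ‖κ • (β - β')‖ := norm_add_le _ _
    _ ≤ L * ‖β - β'‖ + κ * ‖β - β'‖ := by rw [e2]; linarith
    _ = (L + κ) * ‖β - β'‖ := by ring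

end Grad
end Helpers

/-- Lemma 1 of the paper, together with its finite-sum part.
Let `f'_m : ℝ^d → ℝ` be twice continuously differentiable, `L'`-smooth and `μ'`-strongly
convex, `λ ≥ 0` and `Λ ≥ 3λ/(2μ')`.  With
`f_m(w,β_m) = Λ f'_m(M^{-1/2} w) + f'_m(β_m) + (λ/2)‖β_m − M^{-1/2} w‖²` and
`F_MT2(w,β) = (1/M) ∑_m f_m(w,β_m)`, the objective `F_MT2` is jointly `(λ/(2M))`-strongly
convex and each `f_m` is jointly convex, `((ΛL'+λ)/M)`-smooth w.r.t. `w` and `(L'+λ)`-smooth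
w.r.t. `β_m`; moreover if `f'_m = (1/n) ∑_j f'_{m,j}` with each `f'_{m,j}` convex and
`ℒ'`-smooth, then each `f_{m,j}` is jointly convex, `((Λℒ'+λ)/M)`-smooth w.r.t. `w` and
`(ℒ'+λ)`-smooth w.r.t. `β_m`. -/
theorem stmt0_multitask_FL_smoothness_and_strong_convexity
    (d M n : ℕ) (hM : 0 < M) (hn : 0 < n)
    (L' μ' lam Λ 𝓛' : ℝ) (hμ' : 0 < μ') (hlam : 0 ≤ lam)
    (hΛ : 3 * lam / (2 * μ') ≤ Λ)
    (f' : Fin M → Vec d → ℝ)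
    (f'j : Fin M → Fin n → Vec d → ℝ)
    (hC2 : ∀ m, ContDiff ℝ 2 (f' m))
    (hsmooth : ∀ m, ∀ x y : Vec d,
      ‖gradient (f' m) x - gradient (f' m) y‖ ≤ L' * ‖x - y‖)
    (hsc : ∀ m, ConvexOn ℝ Set.univ (fun x : Vec d => f' m x - μ' / 2 * ‖x‖ ^ 2))
    (hsum : ∀ m x, f' m x = (1 / (n : ℝ)) * ∑ j, f'j m j x)
    (hC2j : ∀ m j, ContDiff ℝ 2 (f'j m j))
    (hconvj : ∀ m j, ConvexOn ℝ Set.univ (f'j m j))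
    (hsmoothj : ∀ m j, ∀ x y : Vec d,
      ‖gradient (f'j m j) x - gradient (f'j m j) y‖ ≤ 𝓛' * ‖x - y‖)
    -- the personalized objectives
    (fm : Fin M → Vec d → Vec d → ℝ)
    (hfm : ∀ m (w β : Vec d), fm m w β =
      Λ * f' m ((Real.sqrt M)⁻¹ • w) + f' m β + lam / 2 * ‖β - (Real.sqrt M)⁻¹ • w‖ ^ 2)
    (fmj : Fin M → Fin n → Vec d → Vec d → ℝ)
    (hfmj : ∀ m j (w β : Vec d), fmj m j w β =
      Λ * f'j m j ((Real.sqrt M)⁻¹ • w) + f'j m j β + lam / 2 * ‖β - (Real.sqrt M)⁻¹ • w‖ ^ 2)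
    (FMT2 : WithLp 2 (Vec d × PiLp 2 fun _ : Fin M => Vec d) → ℝ)
    (hF : ∀ p, FMT2 p = (1 / (M : ℝ)) * ∑ m, fm m p.ofLp.1 (p.ofLp.2 m)) :
    -- F_MT2 is jointly (λ/(2M))-strongly convex
    (ConvexOn ℝ Set.univ fun p : WithLp 2 (Vec d × PiLp 2 fun _ : Fin M => Vec d) =>
        FMT2 p - lam / (2 * M) / 2 * ‖p‖ ^ 2)
    -- each f_m is jointly convex
    ∧ (∀ m, ConvexOn ℝ Set.univ fun p : Vec d × Vec d => fm m p.1 p.2)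
    -- f_m is ((ΛL'+λ)/M)-smooth w.r.t. w
    ∧ (∀ m (β w w' : Vec d),
        ‖gradient (fun u => fm m u β) w - gradient (fun u => fm m u β) w'‖
          ≤ (Λ * L' + lam) / M * ‖w - w'‖)
    -- f_m is (L'+λ)-smooth w.r.t. β_m
    ∧ (∀ m (w β β' : Vec d),
        ‖gradient (fun u => fm m w u) β - gradient (fun u => fm m w u) β'‖
          ≤ (L' + lam) * ‖β - β'‖)
    -- each f_{m,j} is jointly convex
    ∧ (∀ m j, ConvexOn ℝ Set.univ fun p : Vec d × Vec d => fmj m j p.1 p.2)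
    -- f_{m,j} is ((Λℒ'+λ)/M)-smooth w.r.t. w
    ∧ (∀ m j (β w w' : Vec d),
        ‖gradient (fun u => fmj m j u β) w - gradient (fun u => fmj m j u β) w'‖
          ≤ (Λ * 𝓛' + lam) / M * ‖w - w'‖)
    -- f_{m,j} is (ℒ'+λ)-smooth w.r.t. β_m
    ∧ (∀ m j (w β β' : Vec d),
        ‖gradient (fun u => fmj m j w u) β - gradient (fun u => fmj m j w u) β'‖
          ≤ (𝓛' + lam) * ‖β - β'‖) := by
  

  classical
  have hM0 : (0:ℝ) < M := by exact_mod_cast hM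
  have hMne : (M:ℝ) ≠ 0 := ne_of_gt hM0
  set s : ℝ := (Real.sqrt M)⁻¹ with hs_def
  have hs0 : 0 ≤ s := inv_nonneg.mpr (Real.sqrt_nonneg _)
  have hs2 : s ^ 2 = (M:ℝ)⁻¹ := by
    rw [hs_def, inv_pow, Real.sq_sqrt hM0.le]
  have hΛ0 : 0 ≤ Λ := le_trans (by positivity) hΛ
  have hΛμ : 3 * lam ≤ Λ * (2 * μ') := (div_le_iff₀ (by positivity)).mp hΛ
  have hdf : ∀ m, Differentiable ℝ (f' m) := fun m => (hC2 m).differentiable two_ne_zero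
  have hdfj : ∀ m j, Differentiable ℝ (f'j m j) :=
    fun m j => (hC2j m j).differentiable two_ne_zero
  have hconv' : ∀ m, ConvexOn ℝ Set.univ (f' m) := by
    intro m
    have h := (hsc m).add (convexOn_normSq.smul (by positivity : (0:ℝ) ≤ μ' / 2))
    exact myConvexCongr h fun x => by simp only [Pi.add_apply, smul_eq_mul]; ring
  refine ⟨?_, ?_, ?_, ?_, ?_, ?_, ?_⟩
  · -- strong convexity of FMT2
    set P := WithLp 2 (Vec d × PiLp 2 fun _ : Fin M => Vec d)
    let LW : P →ₗ[ℝ] Vec d :=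
      { toFun := fun p => p.ofLp.1, map_add' := fun _ _ => rfl, map_smul' := fun _ _ => rfl }
    let LB : Fin M → (P →ₗ[ℝ] Vec d) := fun m =>
      { toFun := fun p => p.ofLp.2 m, map_add' := fun _ _ => rfl, map_smul' := fun _ _ => rfl }
    have hc2 : (0:ℝ) ≤ Λ * μ' / (2 * (M:ℝ) ^ 2) - 3 * lam / (4 * (M:ℝ) ^ 2) := by
      rw [sub_nonneg, div_le_div_iff₀ (by positivity) (by positivity)]
      nlinarith [mul_le_mul_of_nonneg_right hΛμ (sq_nonneg (M:ℝ))]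
    have hconvT : ConvexOn ℝ Set.univ (fun p : P => ∑ m : Fin M,
        (Λ / M * (f' m (s • p.ofLp.1) - μ' / 2 * ‖s • p.ofLp.1‖ ^ 2)
          + (Λ * μ' / (2 * (M:ℝ) ^ 2) - 3 * lam / (4 * (M:ℝ) ^ 2)) * ‖p.ofLp.1‖ ^ 2
          + 1 / M * f' m (p.ofLp.2 m)
          + lam / (4 * M) * ‖p.ofLp.2 m - (2 * s) • p.ofLp.1‖ ^ 2)) := by
      refine convexOn_finsum Finset.univ _ fun m _ => ?_
      have p1 : ConvexOn ℝ Set.univ (fun p : P =>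
          Λ / M * (f' m (s • p.ofLp.1) - μ' / 2 * ‖s • p.ofLp.1‖ ^ 2)) := by
        have := convexOn_smul_comp (Λ / M) (hsc m) (s • LW) (by positivity)
        exact myConvexCongr this fun p => rfl
      have p2 : ConvexOn ℝ Set.univ (fun p : P =>
          (Λ * μ' / (2 * (M:ℝ) ^ 2) - 3 * lam / (4 * (M:ℝ) ^ 2)) * ‖p.ofLp.1‖ ^ 2) := by
        have := convexOn_smul_comp _ (convexOn_normSq (E := Vec d)) LW hc2
        exact myConvexCongr this fun p => rfl
      have p3 : ConvexOn ℝ Set.univ (fun p : P => 1 / (M:ℝ) * f' m (p.ofLp.2 m)) := by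
        have := convexOn_smul_comp (1 / (M:ℝ)) (hconv' m) (LB m) (by positivity)
        exact myConvexCongr this fun p => rfl
      have p4 : ConvexOn ℝ Set.univ (fun p : P =>
          lam / (4 * M) * ‖p.ofLp.2 m - (2 * s) • p.ofLp.1‖ ^ 2) := by
        have := convexOn_smul_comp (lam / (4 * M)) (convexOn_normSq (E := Vec d))
          (LB m - (2 * s) • LW) (by positivity)
        exact myConvexCongr this fun p => rfl
      exact ((p1.add p2).add p3).add p4
    refine myConvexCongr hconvT fun p => ?_
    have hnorm : ‖p‖ ^ 2 = ‖p.ofLp.1‖ ^ 2 + ∑ m : Fin M, ‖p.ofLp.2 m‖ ^ 2 := by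
      rw [WithLp.prod_norm_sq_eq_of_L2]
      exact congrArg (‖p.ofLp.1‖ ^ 2 + ·) (PiLp.norm_sq_eq_of_L2 (fun _ : Fin M => Vec d) p.ofLp.2)
    have hsplit : lam / (2 * (M:ℝ)) / 2 * (‖p.ofLp.1‖ ^ 2 + ∑ m : Fin M, ‖p.ofLp.2 m‖ ^ 2)
        = ∑ m : Fin M, (lam / (4 * M) * ‖p.ofLp.2 m‖ ^ 2
            + lam / (4 * (M:ℝ) ^ 2) * ‖p.ofLp.1‖ ^ 2) := by
      rw [Finset.sum_add_distrib, ← Finset.mul_sum, Finset.sum_const, Finset.card_univ,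
        Fintype.card_fin, nsmul_eq_mul]
      field_simp
      ring
    rw [hF p, hnorm, hsplit, Finset.mul_sum, ← Finset.sum_sub_distrib]
    refine Finset.sum_congr rfl fun m _ => ?_
    rw [hfm m p.ofLp.1 (p.ofLp.2 m)]
    have esm : ∀ t : ℝ, ‖t • p.ofLp.1‖ ^ 2 = t ^ 2 * ‖p.ofLp.1‖ ^ 2 := fun t => by
      rw [norm_smul, Real.norm_eq_abs, mul_pow, sq_abs]
    have e0 : ‖s • p.ofLp.1‖ ^ 2 = (M:ℝ)⁻¹ * ‖p.ofLp.1‖ ^ 2 := by rw [esm, hs2]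
    have e1 : ‖p.ofLp.2 m - s • p.ofLp.1‖ ^ 2
        = ‖p.ofLp.2 m‖ ^ 2 - 2 * (s * inner ℝ (p.ofLp.2 m) p.ofLp.1) + (M:ℝ)⁻¹ * ‖p.ofLp.1‖ ^ 2 := by
      rw [norm_sub_sq_real, real_inner_smul_right, e0]
    have e2 : ‖p.ofLp.2 m - (2 * s) • p.ofLp.1‖ ^ 2
        = ‖p.ofLp.2 m‖ ^ 2 - 4 * (s * inner ℝ (p.ofLp.2 m) p.ofLp.1) + 4 * (M:ℝ)⁻¹ * ‖p.ofLp.1‖ ^ 2 := by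
      rw [norm_sub_sq_real, real_inner_smul_right, esm, mul_pow, hs2]; ring
    rw [e0, e1, e2]
    field_simp
    ring
  · -- joint convexity of fm
    intro m
    have h := convexOn_joint (hconv' m) (hconv' m) hΛ0 hlam s
    exact myConvexCongr h fun p => (hfm m p.1 p.2).symm
  · -- smooth in w
    intro m β w w'
    have he : (fun u => fm m u β)
        = fun u : Vec d => Λ * f' m (s • u) + f' m β + lam / 2 * ‖β - s • u‖ ^ 2 :=
      funext fun u => hfm m u β
    rw [he]
    calc ‖_ - _‖ ≤ (Λ * L' + lam) * s ^ 2 * ‖w - w'‖ :=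
          lipschitz_grad_w (f' m) (hdf m) (hsmooth m) hΛ0 hlam hs0 (f' m β) β w w'
      _ = (Λ * L' + lam) / M * ‖w - w'‖ := by rw [hs2]; ring
  · -- smooth in β
    intro m w β β'
    have he : (fun u => fm m w u)
        = fun u : Vec d => Λ * f' m (s • w) + f' m u + lam / 2 * ‖u - s • w‖ ^ 2 :=
      funext fun u => hfm m w u
    rw [he]
    exact lipschitz_grad_b (f' m) (hdf m) (hsmooth m) hlam (Λ * f' m (s • w)) (s • w) β β'
  · -- joint convexity of fmj
    intro m j
    have h := convexOn_joint (hconvj m j) (hconvj m j) hΛ0 hlam s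
    exact myConvexCongr h fun p => (hfmj m j p.1 p.2).symm
  · -- fmj smooth in w
    intro m j β w w'
    have he : (fun u => fmj m j u β)
        = fun u : Vec d => Λ * f'j m j (s • u) + f'j m j β + lam / 2 * ‖β - s • u‖ ^ 2 :=
      funext fun u => hfmj m j u β
    rw [he]
    calc ‖_ - _‖ ≤ (Λ * 𝓛' + lam) * s ^ 2 * ‖w - w'‖ :=
          lipschitz_grad_w (f'j m j) (hdfj m j) (hsmoothj m j) hΛ0 hlam hs0 (f'j m j β) β w w'
      _ = (Λ * 𝓛' + lam) / M * ‖w - w'‖ := by rw [hs2]; ring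
  · -- fmj smooth in β
    intro m j w β β'
    have he : (fun u => fmj m j w u)
        = fun u : Vec d => Λ * f'j m j (s • w) + f'j m j u + lam / 2 * ‖u - s • w‖ ^ 2 :=
      funext fun u => hfmj m j w u
    rw [he]
    exact lipschitz_grad_b (f'j m j) (hdfj m j) (hsmoothj m j) hlam
      (Λ * f'j m j (s • w)) (s • w) β β'
end
end

section
/- Let f'_m : ℝ^d → ℝ (m = 1,…,M) be twice continuously differentiable, L'-smooth and μ'-strongly convex with 0 < μ' ≤ λ/2. Define F_MX2(w,β) := (1/M)Σ_{m=1}^M f'_m(β_m) + (λ/(2M))Σ_{m=1}^M‖M^{-1/2}w − β_m‖². Then F_MX2 is jointly (μ'/(3M))-strongly convex, and the function f_m(w,β_m) := f'_m(β_m) + (λ/2)‖M^{-1/2}w − β_m‖² is (λ/M)-smooth w.r.t. w and (L'+λ)-smooth w.r.t. β_m. Moreover, if f'_m = (1/n)Σ_{i=1}^n f'_{m,i} with each f'_{m,i} convex and ℒ'-smooth, then f_{m,i}(w,β_m) := f'_{m,i}(β_m) + (λ/2)‖M^{-1/2}w − β_m‖² is jointly convex, (λ/M)-smooth w.r.t.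 w and (ℒ'+λ)-smooth w.r.t. β_m. -/
open Real Finset
noncomputable section

namespace Stmt1Aux

variable {F : Type*} [NormedAddCommGroup F] [InnerProductSpace ℝ F] [CompleteSpace F]

lemma hasGradientAt_normsq_affine (k c : ℝ) (b x : F) :
    HasGradientAt (fun u : F => k * ‖c • u - b‖ ^ 2) ((2 * k * c) • (c • x - b)) x := by
  rw [hasGradientAt_iff_hasFDerivAt]
  have h1 : HasFDerivAt (fun u : F => c • u - b)
      (c • (ContinuousLinearMap.id ℝ F)) x := by
    simpa using ((hasFDerivAt_id x).const_smul c).sub_const b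
  have h2 := (h1.inner ℝ h1).const_mul k
  convert h2 using 1
  · rfl
  · funext u
    rw [real_inner_self_eq_norm_sq]
  · ext v
    simp [fderivInnerCLM_apply, inner_sub_left, inner_sub_right, real_inner_smul_left,
      real_inner_smul_right, InnerProductSpace.toDual_apply_apply]
    rw [real_inner_comm v x, real_inner_comm v b]
    ring

lemma hasGradientAt_add {f g : F → ℝ} {G1 G2 x : F}
    (hf : HasGradientAt f G1 x) (hg : HasGradientAt g G2 x) :
    HasGradientAt (fun u => f u + g u) (G1 + G2) x := by
  rw [hasGradientAt_iff_hasFDerivAt] at *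
  rw [map_add]
  exact hf.add hg

lemma hasGradientAt_normsq_sub (k : ℝ) (a x : F) :
    HasGradientAt (fun u : F => k * ‖a - u‖ ^ 2) ((2 * k) • (x - a)) x := by
  have h := hasGradientAt_normsq_affine k (-1 : ℝ) (-a) x
  have he : (fun u : F => k * ‖(-1 : ℝ) • u - -a‖ ^ 2) = fun u : F => k * ‖a - u‖ ^ 2 := by
    funext u
    have : (-1 : ℝ) • u - -a = a - u := by module
    rw [this]
  have hv : ((2 * k * (-1 : ℝ)) • ((-1 : ℝ) • x - -a)) = (2 * k) • (x - a) := by module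
  rw [he, hv] at h
  exact h

lemma convexOn_normsq : ConvexOn ℝ Set.univ (fun x : F => ‖x‖ ^ 2) := by
  refine ⟨convex_univ, fun x _ y _ a b ha hb hab => ?_⟩
  have h1 : ‖a • x + b • y‖ ≤ a * ‖x‖ + b * ‖y‖ := by
    calc ‖a • x + b • y‖ ≤ ‖a • x‖ + ‖b • y‖ := norm_add_le _ _
      _ = a * ‖x‖ + b * ‖y‖ := by
          rw [norm_smul, norm_smul, Real.norm_of_nonneg ha, Real.norm_of_nonneg hb]
  have h2 : (0:ℝ) ≤ ‖a • x + b • y‖ := norm_nonneg _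
  simp only [smul_eq_mul]
  have h3 : ‖a • x + b • y‖ ^ 2 ≤ (a * ‖x‖ + b * ‖y‖) ^ 2 := by
    apply pow_le_pow_left₀ h2 h1
  nlinarith [h3, sq_nonneg (‖x‖ - ‖y‖), mul_nonneg ha hb]

lemma convexOn_finset_sum {E : Type*} [AddCommGroup E] [Module ℝ E] {ι : Type*}
    (t : Finset ι) {f : ι → E → ℝ} (h : ∀ i ∈ t, ConvexOn ℝ Set.univ (f i)) :
    ConvexOn ℝ Set.univ (fun x => ∑ i ∈ t, f i x) := by
  classical
  induction t using Finset.induction with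
  | empty => simpa using convexOn_const (0:ℝ) convex_univ
  | @insert a s hnm ih =>
      simp only [Finset.sum_insert hnm]
      exact (h a (Finset.mem_insert_self a s)).add
        (ih fun i hi => h i (Finset.mem_insert_of_mem hi))

lemma key_identity (Mr lam μ' fv A : ℝ) (hMr : Mr ≠ 0) (hA : A = lam - μ'/3)
    (hA0 : A ≠ 0) (u β : F) :
    (1/Mr) * (fv - μ'/2 * ‖β‖^2)
      + (A/(2*Mr)) * ‖u - (lam/A) • β‖^2
      + (((lam*μ'/3 - 2*μ'^2/9)/A)/(2*Mr)) * ‖β‖^2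
    = (1/Mr) * fv + (lam/(2*Mr)) * ‖u - β‖^2
      - (μ'/(3*Mr)/2) * (‖u‖^2 + ‖β‖^2) := by
  rw [norm_sub_sq_real, norm_sub_sq_real, norm_smul, real_inner_smul_right, mul_pow,
    Real.norm_eq_abs, sq_abs]
  field_simp
  rw [hA]
  ring

end Stmt1Aux

/-- Lemma 2 of the paper, together with its finite-sum part.
With `F_MX2(w,β) = (1/M)∑_m f'_m(β_m) + (λ/(2M))∑_m ‖M^{-1/2}w − β_m‖²`, under
`0 < μ' ≤ λ/2`, the objective `F_MX2` is jointly `(μ'/(3M))`-strongly convex, the function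
`f_m(w,β_m) = f'_m(β_m) + (λ/2)‖M^{-1/2}w − β_m‖²` is `(λ/M)`-smooth w.r.t. `w` and
`(L'+λ)`-smooth w.r.t. `β_m`, and each
`f_{m,i}(w,β_m) = f'_{m,i}(β_m) + (λ/2)‖M^{-1/2}w − β_m‖²` is jointly convex,
`(λ/M)`-smooth w.r.t. `w` and `(ℒ'+λ)`-smooth w.r.t. `β_m`. -/
theorem stmt1_mixture_FL_smoothness_and_strong_convexity
    (d M n : ℕ) (hM : 0 < M) (hn : 0 < n)
    (L' μ' lam 𝓛' : ℝ) (hlam : 0 < lam) (hμ'pos : 0 < μ') (hμ' : μ' ≤ lam / 2)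
    (f' : Fin M → Vec d → ℝ)
    (f'i : Fin M → Fin n → Vec d → ℝ)
    (hC2 : ∀ m, ContDiff ℝ 2 (f' m))
    (hsmooth : ∀ m, ∀ x y : Vec d,
      ‖gradient (f' m) x - gradient (f' m) y‖ ≤ L' * ‖x - y‖)
    (hsc : ∀ m, ConvexOn ℝ Set.univ (fun x : Vec d => f' m x - μ' / 2 * ‖x‖ ^ 2))
    (hsum : ∀ m x, f' m x = (1 / (n : ℝ)) * ∑ i, f'i m i x)
    (hC2i : ∀ m i, ContDiff ℝ 2 (f'i m i))
    (hconvi : ∀ m i, ConvexOn ℝ Set.univ (f'i m i))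
    (hsmoothi : ∀ m i, ∀ x y : Vec d,
      ‖gradient (f'i m i) x - gradient (f'i m i) y‖ ≤ 𝓛' * ‖x - y‖)
    -- the personalized objectives
    (fm : Fin M → Vec d → Vec d → ℝ)
    (hfm : ∀ m (w β : Vec d), fm m w β =
      f' m β + lam / 2 * ‖(Real.sqrt M)⁻¹ • w - β‖ ^ 2)
    (fmi : Fin M → Fin n → Vec d → Vec d → ℝ)
    (hfmi : ∀ m i (w β : Vec d), fmi m i w β =
      f'i m i β + lam / 2 * ‖(Real.sqrt M)⁻¹ • w - β‖ ^ 2)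
    (FMX2 : WithLp 2 (Vec d × PiLp 2 fun _ : Fin M => Vec d) → ℝ)
    (hF : ∀ p, FMX2 p = ((1 / (M : ℝ)) * ∑ m, f' m (p.ofLp.2 m))
      + (lam / (2 * M)) * ∑ m, ‖(Real.sqrt M)⁻¹ • p.ofLp.1 - p.ofLp.2 m‖ ^ 2) :
    -- F_MX2 is jointly (μ'/(3M))-strongly convex
    (ConvexOn ℝ Set.univ fun p : WithLp 2 (Vec d × PiLp 2 fun _ : Fin M => Vec d) =>
        FMX2 p - μ' / (3 * M) / 2 * ‖p‖ ^ 2)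
    -- f_m is (λ/M)-smooth w.r.t. w
    ∧ (∀ m (β w w' : Vec d),
        ‖gradient (fun u => fm m u β) w - gradient (fun u => fm m u β) w'‖
          ≤ lam / M * ‖w - w'‖)
    -- f_m is (L'+λ)-smooth w.r.t. β_m
    ∧ (∀ m (w β β' : Vec d),
        ‖gradient (fun u => fm m w u) β - gradient (fun u => fm m w u) β'‖
          ≤ (L' + lam) * ‖β - β'‖)
    -- each f_{m,i} is jointly convex
    ∧ (∀ m i, ConvexOn ℝ Set.univ fun p : Vec d × Vec d => fmi m i p.1 p.2)
    -- f_{m,i} is (λ/M)-smooth w.r.t. w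
    ∧ (∀ m i (β w w' : Vec d),
        ‖gradient (fun u => fmi m i u β) w - gradient (fun u => fmi m i u β) w'‖
          ≤ lam / M * ‖w - w'‖)
    -- f_{m,i} is (ℒ'+λ)-smooth w.r.t. β_m
    ∧ (∀ m i (w β β' : Vec d),
        ‖gradient (fun u => fmi m i w u) β - gradient (fun u => fmi m i w u) β'‖
          ≤ (𝓛' + lam) * ‖β - β'‖) := by
  
  classical
  have hMR : (0:ℝ) < (M:ℝ) := Nat.cast_pos.mpr hM
  set c : ℝ := (Real.sqrt (M:ℝ))⁻¹ with hcdef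
  have hcc : c * c = ((M:ℝ))⁻¹ := by
    rw [hcdef, ← mul_inv, Real.mul_self_sqrt hMR.le]
  -- gradient of the w-block
  have gradw : ∀ (K : ℝ) (b v : Vec d),
      gradient (fun u : Vec d => K + lam / 2 * ‖c • u - b‖ ^ 2) v
        = (0 : Vec d) + (2 * (lam/2) * c) • (c • v - b) := fun K b v =>
    (Stmt1Aux.hasGradientAt_add (hasGradientAt_const v K)
      (Stmt1Aux.hasGradientAt_normsq_affine (lam/2) c b v)).gradient
  have hwlip : ∀ (K K' : ℝ) (b w w' : Vec d),
      ‖gradient (fun u : Vec d => K + lam / 2 * ‖c • u - b‖ ^ 2) w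
        - gradient (fun u : Vec d => K' + lam / 2 * ‖c • u - b‖ ^ 2) w'‖
        ≤ lam / M * ‖w - w'‖ := by
    intro K K' b w w'
    rw [gradw, gradw]
    have h1 : ((0:Vec d) + (2*(lam/2)*c) • (c • w - b)) - ((0:Vec d) + (2*(lam/2)*c) • (c • w' - b))
        = (lam * (c*c)) • (w - w') := by module
    rw [h1, norm_smul, Real.norm_eq_abs, hcc, abs_of_nonneg (by positivity), ← div_eq_mul_inv]
  -- gradient of the β-block
  have gradb : ∀ (g : Vec d → ℝ), ContDiff ℝ 2 g → ∀ (a v : Vec d),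
      gradient (fun u : Vec d => g u + lam / 2 * ‖a - u‖ ^ 2) v
        = gradient g v + (2 * (lam/2)) • (v - a) := fun g hg a v =>
    (Stmt1Aux.hasGradientAt_add ((hg.differentiable (by norm_num) v).hasGradientAt)
      (Stmt1Aux.hasGradientAt_normsq_sub (lam/2) a v)).gradient
  have hblip : ∀ (g : Vec d → ℝ) (Lg : ℝ), ContDiff ℝ 2 g →
      (∀ x y : Vec d, ‖gradient g x - gradient g y‖ ≤ Lg * ‖x - y‖) →
      ∀ (a β β' : Vec d),
        ‖gradient (fun u : Vec d => g u + lam / 2 * ‖a - u‖ ^ 2) β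
          - gradient (fun u : Vec d => g u + lam / 2 * ‖a - u‖ ^ 2) β'‖
          ≤ (Lg + lam) * ‖β - β'‖ := by
    intro g Lg hg hLg a β β'
    rw [gradb g hg, gradb g hg]
    have h1 : (gradient g β + (2*(lam/2)) • (β - a))
        - (gradient g β' + (2*(lam/2)) • (β' - a))
        = (gradient g β - gradient g β') + lam • (β - β') := by module
    rw [h1]
    calc ‖(gradient g β - gradient g β') + lam • (β - β')‖
        ≤ ‖gradient g β - gradient g β'‖ + ‖lam • (β - β')‖ := norm_add_le _ _
      _ ≤ Lg * ‖β - β'‖ + lam * ‖β - β'‖ := by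
          refine add_le_add (hLg β β') ?_
          rw [norm_smul, Real.norm_eq_abs, abs_of_pos hlam]
      _ = (Lg + lam) * ‖β - β'‖ := by ring
  refine ⟨?_, ?_, ?_, ?_, ?_, ?_⟩
  · -- joint strong convexity of FMX2
    have hApos : 0 < lam - μ'/3 := by linarith
    have hA0 : lam - μ'/3 ≠ 0 := ne_of_gt hApos
    have hBnn : 0 ≤ (lam*μ'/3 - 2*μ'^2/9)/(lam - μ'/3) := by
      apply div_nonneg _ hApos.le
      nlinarith
    have key : ∀ p : WithLp 2 (Vec d × PiLp 2 fun _ : Fin M => Vec d),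
        FMX2 p - μ' / (3 * ↑M) / 2 * ‖p‖ ^ 2
        = ∑ m : Fin M, ((1/(M:ℝ)) * (f' m (p.ofLp.2 m) - μ'/2 * ‖p.ofLp.2 m‖^2)
            + ((lam - μ'/3)/(2*(M:ℝ))) * ‖c • p.ofLp.1 - (lam/(lam - μ'/3)) • p.ofLp.2 m‖^2
            + (((lam*μ'/3 - 2*μ'^2/9)/(lam - μ'/3))/(2*(M:ℝ))) * ‖p.ofLp.2 m‖^2) := by
      intro p
      have hsum2 := Finset.sum_congr rfl (fun m (_ : m ∈ Finset.univ) =>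
        Stmt1Aux.key_identity (Mr := (M:ℝ)) lam μ' (f' m (p.ofLp.2 m)) (lam - μ'/3)
          (ne_of_gt hMR) rfl hA0 (c • p.ofLp.1) (p.ofLp.2 m))
      rw [hsum2]
      have hn : ‖p‖^2 = ‖p.ofLp.1‖^2 + ∑ m, ‖p.ofLp.2 m‖^2 := by
        rw [WithLp.prod_norm_sq_eq_of_L2, PiLp.norm_sq_eq_of_L2 (fun _ : Fin M => Vec d) p.snd]
        rfl
      have hp1 : ‖p.ofLp.1‖^2 = (M:ℝ) * ‖c • p.ofLp.1‖^2 := by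
        rw [norm_smul, mul_pow, Real.norm_eq_abs, sq_abs, sq c, hcc]
        field_simp
      rw [hF p, hn, hp1, Finset.sum_sub_distrib, Finset.sum_add_distrib,
        ← Finset.mul_sum, ← Finset.mul_sum, ← Finset.mul_sum, Finset.sum_add_distrib,
        Finset.sum_const, Finset.card_univ, Fintype.card_fin, nsmul_eq_mul]
    have hfun : (fun p : WithLp 2 (Vec d × PiLp 2 fun _ : Fin M => Vec d) =>
        FMX2 p - μ' / (3 * ↑M) / 2 * ‖p‖ ^ 2) =
        fun p => ∑ m : Fin M, ((1/(M:ℝ)) * (f' m (p.ofLp.2 m) - μ'/2 * ‖p.ofLp.2 m‖^2)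
            + ((lam - μ'/3)/(2*(M:ℝ))) * ‖c • p.ofLp.1 - (lam/(lam - μ'/3)) • p.ofLp.2 m‖^2
            + (((lam*μ'/3 - 2*μ'^2/9)/(lam - μ'/3))/(2*(M:ℝ))) * ‖p.ofLp.2 m‖^2) :=
      funext key
    rw [hfun]
    apply Stmt1Aux.convexOn_finset_sum
    intro m _
    have e := WithLp.linearEquiv 2 ℝ (Vec d × PiLp 2 fun _ : Fin M => Vec d)
    have e2 := WithLp.linearEquiv 2 ℝ (∀ _ : Fin M, Vec d)
    let Lw : WithLp 2 (Vec d × PiLp 2 fun _ : Fin M => Vec d) →ₗ[ℝ] Vec d :=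
      (LinearMap.fst ℝ (Vec d) (PiLp 2 fun _ : Fin M => Vec d)) ∘ₗ
        (WithLp.linearEquiv 2 ℝ _).toLinearMap
    let Lb : WithLp 2 (Vec d × PiLp 2 fun _ : Fin M => Vec d) →ₗ[ℝ] Vec d :=
      (LinearMap.proj m) ∘ₗ (WithLp.linearEquiv 2 ℝ (∀ _ : Fin M, Vec d)).toLinearMap ∘ₗ
        (LinearMap.snd ℝ (Vec d) (PiLp 2 fun _ : Fin M => Vec d)) ∘ₗ
        (WithLp.linearEquiv 2 ℝ _).toLinearMap
    refine ConvexOn.add (ConvexOn.add ?_ ?_) ?_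
    · have h := ((hsc m).comp_linearMap Lb).smul
        (show (0:ℝ) ≤ 1/(M:ℝ) by positivity)
      exact h
    · have h := ((Stmt1Aux.convexOn_normsq (F := Vec d)).comp_linearMap
          (c • Lw - (lam/(lam - μ'/3)) • Lb)).smul
        (show (0:ℝ) ≤ (lam - μ'/3)/(2*(M:ℝ)) by positivity)
      exact h
    · have h := ((Stmt1Aux.convexOn_normsq (F := Vec d)).comp_linearMap Lb).smul
        (show (0:ℝ) ≤ ((lam*μ'/3 - 2*μ'^2/9)/(lam - μ'/3))/(2*(M:ℝ)) by
          apply div_nonneg _ (by positivity)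
          apply div_nonneg _ hApos.le
          nlinarith)
      exact h
  · -- f_m is (λ/M)-smooth w.r.t. w
    intro m β w w'
    simp only [hfm]
    exact hwlip (f' m β) (f' m β) β w w'
  · -- f_m is (L'+λ)-smooth w.r.t. β
    intro m w β β'
    simp only [hfm]
    have : ∀ u : Vec d, f' m u + lam / 2 * ‖c • w - u‖ ^ 2
        = (fun v : Vec d => f' m v + lam / 2 * ‖c • w - v‖ ^ 2) u := fun u => rfl
    exact hblip (f' m) L' (hC2 m) (hsmooth m) (c • w) β β'
  · -- joint convexity of f_{m,i}
    intro m i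
    simp only [hfmi]
    have h1 : ConvexOn ℝ Set.univ (fun p : Vec d × Vec d => f'i m i p.2) :=
      (hconvi m i).comp_linearMap (LinearMap.snd ℝ (Vec d) (Vec d))
    have h2 : ConvexOn ℝ Set.univ
        (fun p : Vec d × Vec d => lam / 2 * ‖c • p.1 - p.2‖ ^ 2) :=
      ((Stmt1Aux.convexOn_normsq (F := Vec d)).comp_linearMap
        (c • LinearMap.fst ℝ (Vec d) (Vec d) - LinearMap.snd ℝ (Vec d) (Vec d))).smul
        (show (0:ℝ) ≤ lam/2 by positivity)
    exact h1.add h2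
  · -- f_{m,i} is (λ/M)-smooth w.r.t. w
    intro m i β w w'
    simp only [hfmi]
    exact hwlip (f'i m i β) (f'i m i β) β w w'
  · -- f_{m,i} is (ℒ'+λ)-smooth w.r.t. β
    intro m i w β β'
    simp only [hfmi]
    exact hblip (f'i m i) 𝓛' (hC2i m i) (hsmoothi m i) (c • w) β β'
end
end

section
/- Suppose each f_m : ℝ^{d_0+d_m} → ℝ is differentiable and L-smooth. Fix points w_1,…,w_M ∈ ℝ^{d_0} and β_m ∈ ℝ^{d_m}, let w̄ := (1/M)Σ_m w_m, θ_m := (w_m, β_m), θ̂_m := (w̄, β_m). Let g_{m,1} ∈ ℝ^{d_0} and g_{m,2} ∈ ℝ^{d_m} be square-integrable random vectors with E[g_{m,1}] = ∇_w f_m(θ_m) and E[g_{m,2}] = ∇_{β_m} f_m(θ_m), let h := (1/M)Σ_m g_{m,1}, and for a stepsize η ≥ 0 define the updated points θ̂⁺_m := (w̄ − ηh, β_m − η g_{m,2}). Then E[(1/M)Σ_{m=1}^M f_m(θ̂⁺_m)] − (1/M)Σ_{m=1}^M f_m(θ̂_m) ≤ −η⟨(1/M)Σ_m ∇_w f_m(θ̂_m),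 (1/M)Σ_m ∇_w f_m(θ_m)⟩ − (η/M)Σ_m⟨∇_{β_m} f_m(θ̂_m), ∇_{β_m} f_m(θ_m)⟩ + (η²L/2)E‖h‖² + (η²L/(2M))Σ_{m=1}^M E‖g_{m,2}‖². -/
open Real Finset MeasureTheory
open scoped InnerProductSpace
noncomputable section

section Aux

variable {E F : Type*} [NormedAddCommGroup E] [InnerProductSpace ℝ E] [CompleteSpace E]
  [NormedAddCommGroup F] [InnerProductSpace ℝ F] [CompleteSpace F]

lemma taylor_abs (f : E → ℝ) (hf : Differentiable ℝ f) (L : ℝ)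
    (hL : ∀ u v, ‖gradient f u - gradient f v‖ ≤ L * ‖u - v‖) (x y : E) :
    |f y - f x - ⟪gradient f x, y - x⟫_ℝ| ≤ L / 2 * ‖y - x‖ ^ 2 := by
  by_cases hxy : y = x
  · simp [hxy]
  have hL0 : 0 ≤ L := by
    have h1 := hL y x
    have h2 : (0:ℝ) < ‖y - x‖ := by
      simpa [sub_eq_zero] using hxy
    nlinarith [norm_nonneg (gradient f y - gradient f x)]
  set v := y - x with hv
  have hgc : Continuous (gradient f) := by
    rw [Metric.continuous_iff]
    intro b ε hε
    rcases eq_or_lt_of_le hL0 with h | h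
    · exact ⟨1, one_pos, fun a _ => by
        have := hL a b
        rw [← h] at this
        simpa [dist_eq_norm] using lt_of_le_of_lt (by simpa using this) hε⟩
    · refine ⟨ε / L, by positivity, fun a ha => ?_⟩
      have := hL a b
      rw [dist_eq_norm] at *
      calc ‖gradient f a - gradient f b‖ ≤ L * ‖a - b‖ := this
        _ < L * (ε / L) := by exact mul_lt_mul_of_pos_left ha h
        _ = ε := by field_simp
  have hderiv : ∀ t : ℝ, HasDerivAt (fun s : ℝ => f (x + s • v))
      (⟪gradient f (x + t • v), v⟫_ℝ) t := by
    intro t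
    have h1 : HasDerivAt (fun s : ℝ => x + s • v) v t := by
      simpa using ((hasDerivAt_id t).smul_const v).const_add x
    have h2 := (hf (x + t • v)).hasGradientAt.hasFDerivAt
    have := h2.comp_hasDerivAt t h1
    simpa [InnerProductSpace.toDual_apply_apply, Function.comp_def] using this
  have hcont : Continuous fun t : ℝ => ⟪gradient f (x + t • v), v⟫_ℝ :=
    (hgc.comp (by continuity)).inner continuous_const
  have hFTC : f y - f x = ∫ t in (0:ℝ)..1, ⟪gradient f (x + t • v), v⟫_ℝ := by
    have := intervalIntegral.integral_eq_sub_of_hasDerivAt (f := fun s : ℝ => f (x + s • v))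
      (f' := fun t => ⟪gradient f (x + t • v), v⟫_ℝ)
      (fun t _ => hderiv t) (hcont.intervalIntegrable 0 1)
    rw [this]; simp [hv]
  have hconst : ⟪gradient f x, v⟫_ℝ = ∫ _t in (0:ℝ)..1, ⟪gradient f x, v⟫_ℝ := by simp
  rw [hFTC, hconst, ← intervalIntegral.integral_sub (hcont.intervalIntegrable 0 1)
    (intervalIntegrable_const)]
  have hbound : ∀ t ∈ Set.Icc (0:ℝ) 1,
      |⟪gradient f (x + t • v), v⟫_ℝ - ⟪gradient f x, v⟫_ℝ| ≤ L * t * ‖v‖ ^ 2 := by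
    intro t ht
    rw [← inner_sub_left]
    calc |⟪gradient f (x + t • v) - gradient f x, v⟫_ℝ|
        ≤ ‖gradient f (x + t • v) - gradient f x‖ * ‖v‖ := abs_real_inner_le_norm _ _
      _ ≤ (L * ‖t • v‖) * ‖v‖ := by
          gcongr; simpa using hL (x + t • v) x
      _ = L * t * ‖v‖ ^ 2 := by
          rw [norm_smul]; rw [Real.norm_eq_abs, abs_of_nonneg ht.1]; ring
  calc |∫ t in (0:ℝ)..1, (⟪gradient f (x + t • v), v⟫_ℝ - ⟪gradient f x, v⟫_ℝ)|
      ≤ ∫ t in (0:ℝ)..1, |⟪gradient f (x + t • v), v⟫_ℝ - ⟪gradient f x, v⟫_ℝ| :=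
        intervalIntegral.abs_integral_le_integral_abs zero_le_one
    _ ≤ ∫ t in (0:ℝ)..1, L * t * ‖v‖ ^ 2 := by
        apply intervalIntegral.integral_mono_on zero_le_one
        · exact ((hcont.sub continuous_const).abs).intervalIntegrable 0 1
        · exact (by continuity : Continuous fun t : ℝ => L * t * ‖v‖^2).intervalIntegrable 0 1
        · exact hbound
    _ = L / 2 * ‖v‖ ^ 2 := by
        have : ∀ t : ℝ, L * t * ‖v‖ ^ 2 = (L * ‖v‖ ^ 2) * t := fun t => by ring
        simp only [this]
        rw [intervalIntegral.integral_const_mul, integral_id]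
        ring

lemma gradient_prod_fst (f : E → F → ℝ)
    (hf : Differentiable ℝ (fun p : WithLp 2 (E × F) => f p.ofLp.1 p.ofLp.2)) (x : E) (y : F) :
    gradient (fun w => f w y) x
      = (gradient (fun p : WithLp 2 (E × F) => f p.ofLp.1 p.ofLp.2)
          ((WithLp.equiv 2 (E × F)).symm (x, y))).ofLp.1 := by
  set F2 := fun p : WithLp 2 (E × F) => f p.ofLp.1 p.ofLp.2 with hF2
  set u : WithLp 2 (E × F) := (WithLp.equiv 2 (E × F)).symm (x, y) with hu
  set e := WithLp.prodContinuousLinearEquiv 2 ℝ E F with he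
  set G := gradient F2 u with hG
  have hfd : HasFDerivAt F2 (InnerProductSpace.toDual ℝ _ G) u :=
    (hf u).hasGradientAt.hasFDerivAt
  have hA : HasFDerivAt (fun w : E => e.symm (w, y))
      ((e.symm : (E × F) →L[ℝ] WithLp 2 (E × F)).comp (ContinuousLinearMap.inl ℝ E F)) x :=
    (e.symm.hasFDerivAt).comp x (hasFDerivAt_prodMk_left x y)
  have hcomp : HasFDerivAt (fun w : E => f w y)
      ((InnerProductSpace.toDual ℝ _ G).comp
        ((e.symm : (E × F) →L[ℝ] WithLp 2 (E × F)).comp (ContinuousLinearMap.inl ℝ E F))) x := by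
    have : HasFDerivAt (F2 ∘ fun w : E => e.symm (w, y)) _ x := hfd.comp x hA
    exact this
  have hDeq : (InnerProductSpace.toDual ℝ _ G).comp
        ((e.symm : (E × F) →L[ℝ] WithLp 2 (E × F)).comp (ContinuousLinearMap.inl ℝ E F))
      = InnerProductSpace.toDual ℝ E G.ofLp.1 := by
    ext v
    simp only [ContinuousLinearMap.comp_apply, ContinuousLinearMap.inl_apply,
      InnerProductSpace.toDual_apply_apply, ContinuousLinearEquiv.coe_coe,
      WithLp.prodContinuousLinearEquiv_symm_apply]
    rw [WithLp.prod_inner_apply]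
    show ⟪G.ofLp.1, v⟫_ℝ + ⟪G.ofLp.2, (0:F)⟫_ℝ = ⟪G.ofLp.1, v⟫_ℝ
    simp
  rw [hDeq] at hcomp
  simpa using hcomp.hasGradientAt.gradient

lemma gradient_prod_snd (f : E → F → ℝ)
    (hf : Differentiable ℝ (fun p : WithLp 2 (E × F) => f p.ofLp.1 p.ofLp.2)) (x : E) (y : F) :
    gradient (fun w => f x w) y
      = (gradient (fun p : WithLp 2 (E × F) => f p.ofLp.1 p.ofLp.2)
          ((WithLp.equiv 2 (E × F)).symm (x, y))).ofLp.2 := by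
  set F2 := fun p : WithLp 2 (E × F) => f p.ofLp.1 p.ofLp.2 with hF2
  set u : WithLp 2 (E × F) := (WithLp.equiv 2 (E × F)).symm (x, y) with hu
  set e := WithLp.prodContinuousLinearEquiv 2 ℝ E F with he
  set G := gradient F2 u with hG
  have hfd : HasFDerivAt F2 (InnerProductSpace.toDual ℝ _ G) u :=
    (hf u).hasGradientAt.hasFDerivAt
  have hA : HasFDerivAt (fun w : F => e.symm (x, w))
      ((e.symm : (E × F) →L[ℝ] WithLp 2 (E × F)).comp (ContinuousLinearMap.inr ℝ E F)) y :=
    (e.symm.hasFDerivAt).comp y (hasFDerivAt_prodMk_right x y)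
  have hcomp : HasFDerivAt (fun w : F => f x w)
      ((InnerProductSpace.toDual ℝ _ G).comp
        ((e.symm : (E × F) →L[ℝ] WithLp 2 (E × F)).comp (ContinuousLinearMap.inr ℝ E F))) y := by
    have : HasFDerivAt (F2 ∘ fun w : F => e.symm (x, w)) _ y := hfd.comp y hA
    exact this
  have hDeq : (InnerProductSpace.toDual ℝ _ G).comp
        ((e.symm : (E × F) →L[ℝ] WithLp 2 (E × F)).comp (ContinuousLinearMap.inr ℝ E F))
      = InnerProductSpace.toDual ℝ F G.ofLp.2 := by
    ext v
    simp only [ContinuousLinearMap.comp_apply, ContinuousLinearMap.inr_apply,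
      InnerProductSpace.toDual_apply_apply, ContinuousLinearEquiv.coe_coe,
      WithLp.prodContinuousLinearEquiv_symm_apply]
    rw [WithLp.prod_inner_apply]
    show ⟪G.ofLp.1, (0:E)⟫_ℝ + ⟪G.ofLp.2, v⟫_ℝ = ⟪G.ofLp.2, v⟫_ℝ
    simp
  rw [hDeq] at hcomp
  simpa using hcomp.hasGradientAt.gradient

end Aux

set_option maxHeartbeats 2000000 in
/-- Lemma 8 of the paper: one-step descent inequality.  If each `f_m` is
differentiable and `L`-smooth, `g_{m,1}, g_{m,2}` are square-integrable unbiased stochastic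
gradients of `f_m` at `θ_m = (w_m, β_m)`, `h = (1/M)∑_m g_{m,1}`, and
`θ̂⁺_m = (w̄ − ηh, β_m − ηg_{m,2})`, then
`E[(1/M)∑_m f_m(θ̂⁺_m)] − (1/M)∑_m f_m(θ̂_m)
  ≤ −η⟨(1/M)∑_m ∇_w f_m(θ̂_m), (1/M)∑_m ∇_w f_m(θ_m)⟩
    − (η/M)∑_m ⟨∇_{β_m} f_m(θ̂_m), ∇_{β_m} f_m(θ_m)⟩
    + (η²L/2)E‖h‖² + (η²L/(2M))∑_m E‖g_{m,2}‖²`. -/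
theorem stmt12_one_step_descent
    (d0 M : ℕ) (hM : 0 < M) (dm : Fin M → ℕ) (L : ℝ)
    (f : (m : Fin M) → Vec d0 → Vec (dm m) → ℝ)
    (hdiff : ∀ m, Differentiable ℝ
      (fun p : WithLp 2 (Vec d0 × Vec (dm m)) => f m p.ofLp.1 p.ofLp.2))
    (hsmooth : ∀ m, ∀ u v : WithLp 2 (Vec d0 × Vec (dm m)),
      ‖gradient (fun p : WithLp 2 (Vec d0 × Vec (dm m)) => f m p.ofLp.1 p.ofLp.2) u
        - gradient (fun p : WithLp 2 (Vec d0 × Vec (dm m)) => f m p.ofLp.1 p.ofLp.2) v‖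
        ≤ L * ‖u - v‖)
    -- the fixed points
    (w_ : Fin M → Vec d0) (β : ∀ m, Vec (dm m))
    -- the probability space and stochastic gradients
    (Ω : Type) [MeasurableSpace Ω] (μpr : Measure Ω) [IsProbabilityMeasure μpr]
    (g1 : Fin M → Ω → Vec d0) (g2 : (m : Fin M) → Ω → Vec (dm m))
    (hg1L2 : ∀ m, MemLp (g1 m) 2 μpr) (hg2L2 : ∀ m, MemLp (g2 m) 2 μpr)
    (hg1mean : ∀ m, ∫ ω, g1 m ω ∂μpr = gradient (fun u => f m u (β m)) (w_ m))
    (hg2mean : ∀ m, ∫ ω, g2 m ω ∂μpr = gradient (fun u => f m (w_ m) u) (β m))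
    (η : ℝ) (hη : 0 ≤ η) :
    (let wbar : Vec d0 := (M : ℝ)⁻¹ • ∑ m, w_ m;
     let h : Ω → Vec d0 := fun ω => (1 / (M : ℝ)) • ∑ m, g1 m ω;
     (∫ ω, (1 / (M : ℝ)) * ∑ m, f m (wbar - η • h ω) (β m - η • g2 m ω) ∂μpr)
         - (1 / (M : ℝ)) * ∑ m, f m wbar (β m)
       ≤ -η * ⟪(1 / (M : ℝ)) • ∑ m, gradient (fun u => f m u (β m)) wbar,
              (1 / (M : ℝ)) • ∑ m, gradient (fun u => f m u (β m)) (w_ m)⟫_ℝ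
         - (η / M) * ∑ m, ⟪gradient (fun u => f m wbar u) (β m),
              gradient (fun u => f m (w_ m) u) (β m)⟫_ℝ
         + (η ^ 2 * L / 2) * ∫ ω, ‖h ω‖ ^ 2 ∂μpr
         + (η ^ 2 * L / (2 * M)) * ∑ m, ∫ ω, ‖g2 m ω‖ ^ 2 ∂μpr) := by
  intro wbar h
  clear_value wbar
  have hMne : (M : ℝ) ≠ 0 := Nat.cast_ne_zero.mpr hM.ne'
  -- abbreviations
  set a : (m : Fin M) → Vec d0 := fun m => gradient (fun u => f m u (β m)) wbar with ha
  set b : (m : Fin M) → Vec (dm m) := fun m => gradient (fun u => f m wbar u) (β m) with hb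
  set S : Vec d0 := (1 / (M : ℝ)) • ∑ m, gradient (fun u => f m u (β m)) (w_ m) with hS
  -- integrability facts
  have hhL2 : MemLp h 2 μpr := by
    have : MemLp (fun ω => ∑ m, g1 m ω) 2 μpr := memLp_finset_sum _ (fun m _ => hg1L2 m)
    exact this.const_smul (1 / (M : ℝ))
  have hhInt : Integrable h μpr := memLp_one_iff_integrable.mp (hhL2.mono_exponent one_le_two)
  have hg2Int : ∀ m, Integrable (g2 m) μpr := fun m =>
    memLp_one_iff_integrable.mp ((hg2L2 m).mono_exponent one_le_two)
  have hg1Int : ∀ m, Integrable (g1 m) μpr := fun m =>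
    memLp_one_iff_integrable.mp ((hg1L2 m).mono_exponent one_le_two)
  have hI1 : Integrable (fun ω => ‖h ω‖ ^ 2) μpr := hhL2.norm.integrable_sq
  have hI2 : ∀ m, Integrable (fun ω => ‖g2 m ω‖ ^ 2) μpr := fun m => (hg2L2 m).norm.integrable_sq
  have hinnerh : ∀ m, Integrable (fun ω => ⟪a m, h ω⟫_ℝ) μpr := fun m => hhInt.const_inner _
  have hinnerg2 : ∀ m, Integrable (fun ω => ⟪b m, g2 m ω⟫_ℝ) μpr := fun m =>
    (hg2Int m).const_inner _
  have hEh : ∫ ω, h ω ∂μpr = S := by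
    show ∫ ω, (1 / (M : ℝ)) • ∑ m, g1 m ω ∂μpr = S
    rw [integral_smul, integral_finset_sum _ (fun m _ => hg1Int m)]
    rw [hS]
    congr 1
    exact Finset.sum_congr rfl fun m _ => hg1mean m
  clear_value h
  -- the pointwise Taylor bound
  have key : ∀ (m : Fin M) (ω : Ω),
      |f m (wbar - η • h ω) (β m - η • g2 m ω) - f m wbar (β m)
        - (-(η * ⟪a m, h ω⟫_ℝ) - η * ⟪b m, g2 m ω⟫_ℝ)|
        ≤ L / 2 * (η ^ 2 * ‖h ω‖ ^ 2 + η ^ 2 * ‖g2 m ω‖ ^ 2) := by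
    intro m ω
    have ht := taylor_abs (fun p : WithLp 2 (Vec d0 × Vec (dm m)) => f m p.ofLp.1 p.ofLp.2)
      (hdiff m) L (hsmooth m)
      ((WithLp.equiv 2 _).symm (wbar, β m))
      ((WithLp.equiv 2 _).symm (wbar - η • h ω, β m - η • g2 m ω))
    have h1 : ⟪gradient (fun p : WithLp 2 (Vec d0 × Vec (dm m)) => f m p.ofLp.1 p.ofLp.2)
          ((WithLp.equiv 2 _).symm (wbar, β m)),
          (WithLp.equiv 2 _).symm (wbar - η • h ω, β m - η • g2 m ω)
            - (WithLp.equiv 2 _).symm (wbar, β m)⟫_ℝ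
        = -(η * ⟪a m, h ω⟫_ℝ) - η * ⟪b m, g2 m ω⟫_ℝ := by
      rw [WithLp.prod_inner_apply]
      rw [← gradient_prod_fst (f m) (hdiff m) wbar (β m),
        ← gradient_prod_snd (f m) (hdiff m) wbar (β m)]
      show ⟪a m, (wbar - η • h ω) - wbar⟫_ℝ + ⟪b m, (β m - η • g2 m ω) - β m⟫_ℝ
        = -(η * ⟪a m, h ω⟫_ℝ) - η * ⟪b m, g2 m ω⟫_ℝ
      rw [sub_sub_cancel_left, sub_sub_cancel_left, inner_neg_right, inner_neg_right,
        real_inner_smul_right, real_inner_smul_right]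
      ring
    have h2 : ‖(WithLp.equiv 2 _).symm (wbar - η • h ω, β m - η • g2 m ω)
          - ((WithLp.equiv 2 _).symm (wbar, β m)
            : WithLp 2 (Vec d0 × Vec (dm m)))‖ ^ 2
        = η ^ 2 * ‖h ω‖ ^ 2 + η ^ 2 * ‖g2 m ω‖ ^ 2 := by
      rw [WithLp.prod_norm_sq_eq_of_L2]
      show ‖(wbar - η • h ω) - wbar‖ ^ 2 + ‖(β m - η • g2 m ω) - β m‖ ^ 2 = _
      rw [sub_sub_cancel_left, sub_sub_cancel_left, norm_neg, norm_neg, norm_smul, norm_smul,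
        mul_pow, mul_pow, Real.norm_eq_abs, sq_abs]
    rw [h1, h2] at ht
    exact ht
  -- measurability of the composite integrand
  have haesm : ∀ m, AEStronglyMeasurable
      (fun ω => f m (wbar - η • h ω) (β m - η • g2 m ω)) μpr := by
    intro m
    have hcf : Continuous (fun q : Vec d0 × Vec (dm m) => f m q.1 q.2) := by
      haveI : ContinuousSMul ℝ (WithLp 2 (Vec d0 × Vec (dm m))) := IsBoundedSMul.continuousSMul
      have h1 := (hdiff m).continuous
      have h2 : Continuous fun q : Vec d0 × Vec (dm m) =>
          ((WithLp.equiv 2 _).symm q : WithLp 2 (Vec d0 × Vec (dm m))) :=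
        (WithLp.prodContinuousLinearEquiv 2 ℝ (Vec d0) (Vec (dm m))).symm.continuous
      exact h1.comp h2
    have hp : AEStronglyMeasurable (fun ω => (wbar - η • h ω, β m - η • g2 m ω)) μpr :=
      (aestronglyMeasurable_const.sub (hhL2.aestronglyMeasurable.const_smul η)).prodMk
        (aestronglyMeasurable_const.sub ((hg2L2 m).aestronglyMeasurable.const_smul η))
    exact hcf.comp_aestronglyMeasurable hp
  -- integrability of the composite integrand
  have hfmInt : ∀ m, Integrable (fun ω => f m (wbar - η • h ω) (β m - η • g2 m ω)) μpr := by
    intro m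
    apply Integrable.mono'
      (g := fun ω => |f m wbar (β m)| + (η * |⟪a m, h ω⟫_ℝ| + η * |⟪b m, g2 m ω⟫_ℝ|)
        + L / 2 * (η ^ 2 * ‖h ω‖ ^ 2 + η ^ 2 * ‖g2 m ω‖ ^ 2))
      (((integrable_const _).add
        (((hinnerh m).abs.const_mul η).add ((hinnerg2 m).abs.const_mul η))).add
        (((hI1.const_mul (η ^ 2)).add ((hI2 m).const_mul (η ^ 2))).const_mul (L / 2)))
      (haesm m)
    apply Filter.Eventually.of_forall
    intro ω
    have k := abs_le.mp (key m ω)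
    have p1 : η * ⟪a m, h ω⟫_ℝ ≤ η * |⟪a m, h ω⟫_ℝ| :=
      mul_le_mul_of_nonneg_left (le_abs_self _) hη
    have p1' : -(η * |⟪a m, h ω⟫_ℝ|) ≤ η * ⟪a m, h ω⟫_ℝ := by
      have := mul_le_mul_of_nonneg_left (neg_abs_le ⟪a m, h ω⟫_ℝ) hη
      linarith [this]
    have p2 : η * ⟪b m, g2 m ω⟫_ℝ ≤ η * |⟪b m, g2 m ω⟫_ℝ| :=
      mul_le_mul_of_nonneg_left (le_abs_self _) hη
    have p2' : -(η * |⟪b m, g2 m ω⟫_ℝ|) ≤ η * ⟪b m, g2 m ω⟫_ℝ := by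
      have := mul_le_mul_of_nonneg_left (neg_abs_le ⟪b m, g2 m ω⟫_ℝ) hη
      linarith [this]
    rw [Real.norm_eq_abs, abs_le]
    constructor
    · linarith [k.1, k.2, neg_abs_le (f m wbar (β m)), le_abs_self (f m wbar (β m))]
    · linarith [k.1, k.2, neg_abs_le (f m wbar (β m)), le_abs_self (f m wbar (β m))]
  -- the dominating function and its integrability
  set U : (m : Fin M) → Ω → ℝ := fun m ω =>
    f m wbar (β m) + (-(η * ⟪a m, h ω⟫_ℝ) - η * ⟪b m, g2 m ω⟫_ℝ)
      + L / 2 * (η ^ 2 * ‖h ω‖ ^ 2 + η ^ 2 * ‖g2 m ω‖ ^ 2) with hU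
  have hUint : ∀ m, Integrable (U m) μpr := fun m =>
    ((integrable_const _).add
      ((((hinnerh m).const_mul η).neg).sub ((hinnerg2 m).const_mul η))).add
      (((hI1.const_mul (η ^ 2)).add ((hI2 m).const_mul (η ^ 2))).const_mul (L / 2))
  -- step 1 : integral monotonicity
  have ineq1 : (∫ ω, (1 / (M : ℝ)) * ∑ m, f m (wbar - η • h ω) (β m - η • g2 m ω) ∂μpr)
      ≤ ∫ ω, (1 / (M : ℝ)) * ∑ m, U m ω ∂μpr := by
    apply integral_mono
      ((integrable_finset_sum _ (fun m _ => hfmInt m)).const_mul _)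
      ((integrable_finset_sum _ (fun m _ => hUint m)).const_mul _)
    intro ω
    have h0 : (0:ℝ) ≤ 1 / (M : ℝ) := by positivity
    apply mul_le_mul_of_nonneg_left _ h0
    apply Finset.sum_le_sum
    intro m _
    have k := (abs_le.mp (key m ω)).2
    simp only [hU]
    linarith [k]
  -- step 2 : compute the integral of U
  have eq2 : ∫ ω, (1 / (M : ℝ)) * ∑ m, U m ω ∂μpr
      = (1 / (M : ℝ)) * ∑ m, (f m wbar (β m)
          + (-(η * ⟪a m, S⟫_ℝ) - η * ⟪b m, gradient (fun u => f m (w_ m) u) (β m)⟫_ℝ)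
          + L / 2 * (η ^ 2 * (∫ ω, ‖h ω‖ ^ 2 ∂μpr) + η ^ 2 * (∫ ω, ‖g2 m ω‖ ^ 2 ∂μpr))) := by
    rw [integral_const_mul, integral_finset_sum _ (fun m _ => hUint m)]
    congr 1
    apply Finset.sum_congr rfl
    intro m _
    have i1 : Integrable (fun ω => η * ⟪a m, h ω⟫_ℝ) μpr := (hinnerh m).const_mul η
    have i2 : Integrable (fun ω => η * ⟪b m, g2 m ω⟫_ℝ) μpr := (hinnerg2 m).const_mul η
    have i3 : Integrable (fun ω => -(η * ⟪a m, h ω⟫_ℝ)) μpr := i1.neg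
    have hBint : Integrable (fun ω => -(η * ⟪a m, h ω⟫_ℝ) - η * ⟪b m, g2 m ω⟫_ℝ) μpr :=
      i3.sub i2
    have hABint : Integrable (fun ω => f m wbar (β m)
        + (-(η * ⟪a m, h ω⟫_ℝ) - η * ⟪b m, g2 m ω⟫_ℝ)) μpr :=
      (integrable_const _).add hBint
    have j1 : Integrable (fun ω => η ^ 2 * ‖h ω‖ ^ 2) μpr := hI1.const_mul (η ^ 2)
    have j2 : Integrable (fun ω => η ^ 2 * ‖g2 m ω‖ ^ 2) μpr := (hI2 m).const_mul (η ^ 2)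
    have hCint : Integrable
        (fun ω => L / 2 * (η ^ 2 * ‖h ω‖ ^ 2 + η ^ 2 * ‖g2 m ω‖ ^ 2)) μpr :=
      (j1.add j2).const_mul (L / 2)
    simp only [hU]
    rw [integral_add hABint hCint,
      integral_add (integrable_const (f m wbar (β m))) hBint]
    rw [integral_const]
    rw [integral_sub i3 i2]
    rw [integral_neg, integral_const_mul, integral_const_mul]
    rw [integral_inner hhInt, integral_inner (hg2Int m), hEh, hg2mean]
    rw [integral_const_mul, integral_add j1 j2, integral_const_mul, integral_const_mul]
    simp
  -- step 3 : algebra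
  have eq3 : (1 / (M : ℝ)) * ∑ m, (f m wbar (β m)
          + (-(η * ⟪a m, S⟫_ℝ) - η * ⟪b m, gradient (fun u => f m (w_ m) u) (β m)⟫_ℝ)
          + L / 2 * (η ^ 2 * (∫ ω, ‖h ω‖ ^ 2 ∂μpr) + η ^ 2 * (∫ ω, ‖g2 m ω‖ ^ 2 ∂μpr)))
        - (1 / (M : ℝ)) * ∑ m, f m wbar (β m)
      = -η * ⟪(1 / (M : ℝ)) • ∑ m, a m, S⟫_ℝ
        - (η / M) * ∑ m, ⟪b m, gradient (fun u => f m (w_ m) u) (β m)⟫_ℝ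
        + (η ^ 2 * L / 2) * ∫ ω, ‖h ω‖ ^ 2 ∂μpr
        + (η ^ 2 * L / (2 * M)) * ∑ m, ∫ ω, ‖g2 m ω‖ ^ 2 ∂μpr := by
    have hinn : ⟪(1 / (M : ℝ)) • ∑ m, a m, S⟫_ℝ = (1 / (M : ℝ)) * ∑ m, ⟪a m, S⟫_ℝ := by
      rw [real_inner_smul_left, sum_inner]
    rw [hinn]
    simp only [Finset.sum_add_distrib, Finset.sum_sub_distrib, Finset.sum_neg_distrib,
      mul_add, ← Finset.mul_sum, Finset.sum_const, Finset.card_univ, Fintype.card_fin,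
      nsmul_eq_mul]
    field_simp
    ring
  refine le_trans (sub_le_sub_right ineq1 _) ?_
  rw [eq2]
  exact le_of_eq eq3
end
end

section
/- Suppose each f_m : ℝ^{d_0+d_m} → ℝ is differentiable and L-smooth. Fix points w_1,…,w_M ∈ ℝ^{d_0}, β_m ∈ ℝ^{d_m}, let w̄ := (1/M)Σ_m w_m, θ_m := (w_m, β_m), θ̂_m := (w̄, β_m), and V := (1/M)Σ_m‖w_m − w̄‖². Then for every η ≥ 0: −η⟨(1/M)Σ_m ∇_w f_m(θ̂_m), (1/M)Σ_m ∇_w f_m(θ_m)⟩ − (η/M)Σ_m⟨∇_{β_m} f_m(θ̂_m), ∇_{β_m} f_m(θ_m)⟩ ≤ −(η/2)‖G(θ̂)‖² − (η/2)‖G(θ)‖² + (ηL²/2)V, where G(θ) (respectively G(θ̂)) denotes the vector with w-component (1/M)Σ_m ∇_w f_m(θ_m) and β_m-components (1/M)∇_{β_m} f_m(θ_m) (respectively with θ_m replaced by θ̂_m). -/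
open Real Finset
open scoped InnerProductSpace
noncomputable section

section aux
variable {E F : Type*} [NormedAddCommGroup E] [InnerProductSpace ℝ E]
  [NormedAddCommGroup F] [InnerProductSpace ℝ F] [CompleteSpace E] [CompleteSpace F]

lemma aux_hasGradientAt_fst (g : WithLp 2 (E × F) → ℝ) (p : WithLp 2 (E × F))
    (h : DifferentiableAt ℝ g p) :
    HasGradientAt (fun u : E => g ((WithLp.equiv 2 (E × F)).symm (u, p.ofLp.2)))
      ((gradient g p).ofLp.1) p.ofLp.1 := by
  have hg := h.hasGradientAt
  rw [hasGradientAt_iff_hasFDerivAt] at hg ⊢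
  set ι₀ : E →L[ℝ] WithLp 2 (E × F) :=
    ((WithLp.prodContinuousLinearEquiv 2 ℝ E F).symm : (E × F) →L[ℝ] WithLp 2 (E × F)).comp
      (ContinuousLinearMap.inl ℝ E F) with hι₀
  have hι : HasFDerivAt (fun u : E => ((WithLp.equiv 2 (E × F)).symm (u, p.ofLp.2))) ι₀ p.ofLp.1 := by
    have : (fun u : E => ((WithLp.equiv 2 (E × F)).symm (u, p.ofLp.2)))
        = fun u => ι₀ u + (WithLp.equiv 2 (E × F)).symm (0, p.ofLp.2) := by
      funext u
      apply (WithLp.equiv 2 (E × F)).injective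
      simp [hι₀, Prod.ext_iff]
    rw [this]
    exact ι₀.hasFDerivAt.add_const _
  have key := hg.comp p.ofLp.1 hι
  have e : ((InnerProductSpace.toDual ℝ (WithLp 2 (E × F)) (gradient g p)) :
        WithLp 2 (E × F) →L[ℝ] ℝ).comp ι₀
      = InnerProductSpace.toDual ℝ E ((gradient g p).ofLp.1) := by
    ext v
    show ⟪gradient g p, ι₀ v⟫_ℝ = _
    rw [WithLp.prod_inner_apply]
    simp [hι₀]
  rw [e] at key
  exact key

lemma aux_hasGradientAt_snd (g : WithLp 2 (E × F) → ℝ) (p : WithLp 2 (E × F))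
    (h : DifferentiableAt ℝ g p) :
    HasGradientAt (fun u : F => g ((WithLp.equiv 2 (E × F)).symm (p.ofLp.1, u)))
      ((gradient g p).ofLp.2) p.ofLp.2 := by
  have hg := h.hasGradientAt
  rw [hasGradientAt_iff_hasFDerivAt] at hg ⊢
  set ι₀ : F →L[ℝ] WithLp 2 (E × F) :=
    ((WithLp.prodContinuousLinearEquiv 2 ℝ E F).symm : (E × F) →L[ℝ] WithLp 2 (E × F)).comp
      (ContinuousLinearMap.inr ℝ E F) with hι₀
  have hι : HasFDerivAt (fun u : F => ((WithLp.equiv 2 (E × F)).symm (p.ofLp.1, u))) ι₀ p.ofLp.2 := by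
    have : (fun u : F => ((WithLp.equiv 2 (E × F)).symm (p.ofLp.1, u)))
        = fun u => ι₀ u + (WithLp.equiv 2 (E × F)).symm (p.ofLp.1, 0) := by
      funext u
      apply (WithLp.equiv 2 (E × F)).injective
      simp [hι₀, Prod.ext_iff]
    rw [this]
    exact ι₀.hasFDerivAt.add_const _
  have key := hg.comp p.ofLp.2 hι
  have e : ((InnerProductSpace.toDual ℝ (WithLp 2 (E × F)) (gradient g p)) :
        WithLp 2 (E × F) →L[ℝ] ℝ).comp ι₀
      = InnerProductSpace.toDual ℝ F ((gradient g p).ofLp.2) := by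
    ext v
    show ⟪gradient g p, ι₀ v⟫_ℝ = _
    rw [WithLp.prod_inner_apply]
    simp [hι₀]
  rw [e] at key
  exact key

lemma aux_real_inner_eq_sq (x y : E) : ⟪x, y⟫_ℝ = (‖x‖ ^ 2 + ‖y‖ ^ 2 - ‖x - y‖ ^ 2) / 2 := by
  have := norm_sub_sq_real x y
  linarith

end aux

set_option maxHeartbeats 1000000

/-- Lemma 10 of the paper.  If each `f_m` is differentiable and
`L`-smooth, then for `θ_m = (w_m,β_m)`, `θ̂_m = (w̄,β_m)`, `V = (1/M)∑_m‖w_m−w̄‖²` and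
every `η ≥ 0`,
`−η⟨(1/M)∑_m ∇_w f_m(θ̂_m), (1/M)∑_m ∇_w f_m(θ_m)⟩
  − (η/M)∑_m ⟨∇_{β_m} f_m(θ̂_m), ∇_{β_m} f_m(θ_m)⟩
  ≤ −(η/2)‖G(θ̂)‖² − (η/2)‖G(θ)‖² + (ηL²/2)V`,
where `‖G(θ)‖² = ‖(1/M)∑_m ∇_w f_m(θ_m)‖² + ∑_m ‖(1/M)∇_{β_m} f_m(θ_m)‖²`. -/
theorem stmt14_inner_product_bound
    (d0 M : ℕ) (hM : 0 < M) (dm : Fin M → ℕ) (L : ℝ)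
    (f : (m : Fin M) → Vec d0 → Vec (dm m) → ℝ)
    (hdiff : ∀ m, Differentiable ℝ
      (fun p : WithLp 2 (Vec d0 × Vec (dm m)) => f m p.ofLp.1 p.ofLp.2))
    (hsmooth : ∀ m, ∀ u v : WithLp 2 (Vec d0 × Vec (dm m)),
      ‖gradient (fun p : WithLp 2 (Vec d0 × Vec (dm m)) => f m p.ofLp.1 p.ofLp.2) u
        - gradient (fun p : WithLp 2 (Vec d0 × Vec (dm m)) => f m p.ofLp.1 p.ofLp.2) v‖
        ≤ L * ‖u - v‖)
    (w_ : Fin M → Vec d0) (β : ∀ m, Vec (dm m)) (η : ℝ) (hη : 0 ≤ η) :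
    -- abbreviations: w̄, V, and the partial gradients at θ_m and θ̂_m
    (let wbar : Vec d0 := (M : ℝ)⁻¹ • ∑ m, w_ m
     let V : ℝ := (1 / (M : ℝ)) * ∑ m, ‖w_ m - wbar‖ ^ 2
     let gwθ : (m : Fin M) → Vec d0 := fun m => gradient (fun u => f m u (β m)) (w_ m)
     let gwθh : (m : Fin M) → Vec d0 := fun m => gradient (fun u => f m u (β m)) wbar
     let gbθ : (m : Fin M) → Vec (dm m) := fun m => gradient (fun u => f m (w_ m) u) (β m)
     let gbθh : (m : Fin M) → Vec (dm m) := fun m => gradient (fun u => f m wbar u) (β m);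
     -η * ⟪(1 / (M : ℝ)) • ∑ m, gwθh m, (1 / (M : ℝ)) • ∑ m, gwθ m⟫_ℝ
       - (η / M) * ∑ m, ⟪gbθh m, gbθ m⟫_ℝ
     ≤ -(η / 2) * (‖(1 / (M : ℝ)) • ∑ m, gwθh m‖ ^ 2 + ∑ m, ‖(1 / (M : ℝ)) • gbθh m‖ ^ 2)
       - (η / 2) * (‖(1 / (M : ℝ)) • ∑ m, gwθ m‖ ^ 2 + ∑ m, ‖(1 / (M : ℝ)) • gbθ m‖ ^ 2)
       + (η * L ^ 2 / 2) * V) := by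
  intro wbar V gwθ gwθh gbθ gbθh
  have hM0 : (0 : ℝ) < (M : ℝ) := by exact_mod_cast hM
  have hM1 : (1 : ℝ) ≤ (M : ℝ) := by exact_mod_cast hM
  set t : ℝ := 1 / (M : ℝ) with ht_def
  have ht : 0 < t := by positivity
  have htM : t * (M : ℝ) = 1 := by rw [ht_def]; field_simp
  have ht1 : t ≤ 1 := by rw [ht_def]; rw [div_le_one hM0]; exact hM1
  -- per-m smoothness bound on gradient components
  have hDm : ∀ m, ‖gwθh m - gwθ m‖ ^ 2 + ‖gbθh m - gbθ m‖ ^ 2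
      ≤ L ^ 2 * ‖w_ m - wbar‖ ^ 2 := by
    intro m
    set g : WithLp 2 (Vec d0 × Vec (dm m)) → ℝ := fun p => f m p.ofLp.1 p.ofLp.2 with hg
    set pp : WithLp 2 (Vec d0 × Vec (dm m)) :=
      (WithLp.equiv 2 (Vec d0 × Vec (dm m))).symm (wbar, β m) with hpp
    set qq : WithLp 2 (Vec d0 × Vec (dm m)) :=
      (WithLp.equiv 2 (Vec d0 × Vec (dm m))).symm (w_ m, β m) with hqq
    have e1 : gwθh m = (gradient g pp).ofLp.1 :=
      (aux_hasGradientAt_fst g pp ((hdiff m) pp)).gradient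
    have e2 : gwθ m = (gradient g qq).ofLp.1 :=
      (aux_hasGradientAt_fst g qq ((hdiff m) qq)).gradient
    have e3 : gbθh m = (gradient g pp).ofLp.2 :=
      (aux_hasGradientAt_snd g pp ((hdiff m) pp)).gradient
    have e4 : gbθ m = (gradient g qq).ofLp.2 :=
      (aux_hasGradientAt_snd g qq ((hdiff m) qq)).gradient
    have hs := hsmooth m pp qq
    have hn : ‖pp - qq‖ ^ 2 = ‖w_ m - wbar‖ ^ 2 := by
      rw [WithLp.prod_norm_sq_eq_of_L2]
      have h1 : (pp - qq).fst = wbar - w_ m := rfl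
      have h2 : (pp - qq).snd = β m - β m := rfl
      rw [h1, h2, sub_self, norm_sub_rev]
      simp
    have hg2 : ‖gradient g pp - gradient g qq‖ ^ 2
        = ‖gwθh m - gwθ m‖ ^ 2 + ‖gbθh m - gbθ m‖ ^ 2 := by
      rw [WithLp.prod_norm_sq_eq_of_L2, e1, e2, e3, e4]
      rfl
    have hsq := pow_le_pow_left₀ (norm_nonneg _) hs 2
    rw [hg2] at hsq
    calc ‖gwθh m - gwθ m‖ ^ 2 + ‖gbθh m - gbθ m‖ ^ 2
        ≤ (L * ‖pp - qq‖) ^ 2 := hsq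
      _ = L ^ 2 * ‖pp - qq‖ ^ 2 := by ring
      _ = L ^ 2 * ‖w_ m - wbar‖ ^ 2 := by rw [hn]
  set A : Vec d0 := t • ∑ m, gwθh m with hA
  set B : Vec d0 := t • ∑ m, gwθ m with hB
  set P : ℝ := ∑ m, ‖gbθh m‖ ^ 2 with hP_def
  set Q : ℝ := ∑ m, ‖gbθ m‖ ^ 2 with hQ_def
  set D : ℝ := ∑ m, ‖gbθh m - gbθ m‖ ^ 2 with hD_def
  set W : ℝ := ∑ m, ‖gwθh m - gwθ m‖ ^ 2 with hW_def
  set S : ℝ := ∑ m, ‖w_ m - wbar‖ ^ 2 with hS_def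
  have hP : 0 ≤ P := by rw [hP_def]; positivity
  have hQ : 0 ≤ Q := by rw [hQ_def]; positivity
  have hD : 0 ≤ D := by rw [hD_def]; positivity
  have hW : 0 ≤ W := by rw [hW_def]; positivity
  have h_inner_AB : ⟪A, B⟫_ℝ = (‖A‖ ^ 2 + ‖B‖ ^ 2 - ‖A - B‖ ^ 2) / 2 :=
    aux_real_inner_eq_sq A B
  have h_sum_inner : ∑ m, ⟪gbθh m, gbθ m⟫_ℝ = (P + Q - D) / 2 := by
    rw [hP_def, hQ_def, hD_def]
    simp_rw [aux_real_inner_eq_sq]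
    rw [← Finset.sum_div, Finset.sum_sub_distrib, Finset.sum_add_distrib]
  have hnt : ‖t‖ = t := Real.norm_of_nonneg ht.le
  have h_smul_h : ∑ m, ‖t • gbθh m‖ ^ 2 = t ^ 2 * P := by
    rw [hP_def, Finset.mul_sum]
    refine Finset.sum_congr rfl fun m _ => ?_
    rw [norm_smul, mul_pow, hnt]
  have h_smul_b : ∑ m, ‖t • gbθ m‖ ^ 2 = t ^ 2 * Q := by
    rw [hQ_def, Finset.mul_sum]
    refine Finset.sum_congr rfl fun m _ => ?_
    rw [norm_smul, mul_pow, hnt]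
  have hc : ‖A - B‖ ^ 2 ≤ t * W := by
    have hAB : A - B = t • ∑ m, (gwθh m - gwθ m) := by
      rw [hA, hB, ← smul_sub, ← Finset.sum_sub_distrib]
    have hJ : ‖∑ m, (gwθh m - gwθ m)‖ ^ 2 ≤ (M : ℝ) * W := by
      calc ‖∑ m, (gwθh m - gwθ m)‖ ^ 2
          ≤ (∑ m, ‖gwθh m - gwθ m‖) ^ 2 :=
            pow_le_pow_left₀ (norm_nonneg _) (norm_sum_le _ _) 2
        _ ≤ (#(univ : Finset (Fin M)) : ℝ) * ∑ m, ‖gwθh m - gwθ m‖ ^ 2 :=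
            sq_sum_le_card_mul_sum_sq
        _ = (M : ℝ) * W := by rw [hW_def]; simp
    calc ‖A - B‖ ^ 2 = t ^ 2 * ‖∑ m, (gwθh m - gwθ m)‖ ^ 2 := by
          rw [hAB, norm_smul, mul_pow, hnt]
      _ ≤ t ^ 2 * ((M : ℝ) * W) := by
          exact mul_le_mul_of_nonneg_left hJ (by positivity)
      _ = (t * (M : ℝ)) * (t * W) := by ring
      _ = t * W := by rw [htM, one_mul]
  have hWD : W + D ≤ L ^ 2 * S := by
    rw [hW_def, hD_def, hS_def, ← Finset.sum_add_distrib, Finset.mul_sum]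
    exact Finset.sum_le_sum fun m _ => hDm m
  have hV : V = t * S := rfl
  have hdivM : η / (M : ℝ) = η * t := by rw [ht_def]; ring
  rw [hV, hdivM, h_inner_AB, h_sum_inner, h_smul_h, h_smul_b]
  nlinarith [mul_nonneg hη (sub_nonneg.mpr hc),
    mul_nonneg (mul_nonneg hη ht.le) (sub_nonneg.mpr hWD),
    mul_nonneg (mul_nonneg (mul_nonneg hη (sub_nonneg.mpr ht1)) ht.le) (add_nonneg hP hQ)]
end
end

section
/- Let k_p ≤ v_p be integers, D > 0, and for k_p ≤ k ≤ v_p let η_k > 0, Δ_k ∈ (0,1], B_k ≥ 0, c_k ∈ ℝ, e_k ≥ 0 be reals, and let a_k (k_p ≤ k ≤ v_p + 1) be reals satisfying the recursion a_{k+1} ≤ Δ_k a_k + (η_k/2)(−1 + Dη_k)e_k + B_k Σ_{t=k_p}^{k−1} η_t² e_t + c_k for all k_p ≤ k ≤ v_p (empty sums being zero). Assume the stepsize conditions: for every j with k_p ≤ j ≤ v_p, η_j ≤ (D + 2(B_{v_p} + Σ_{i=j+1}^{v_p−1} B_i ∏_{l=i+1}^{v_p} Δ_l)/∏_{i=j+1}^{v_p}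 Δ_i)^{−1}, where for j = v_p this reads η_{v_p} ≤ 1/D (empty sums are zero and empty products are one). Then a_{v_p+1} ≤ (∏_{k=k_p}^{v_p} Δ_k)·a_{k_p} + Σ_{k=k_p}^{v_p−1}(∏_{i=k+1}^{v_p} Δ_i)·c_k + c_{v_p}. -/
open Finset
noncomputable section

/-- Lemma 13 of the paper: a recursion lemma for finite real sequences.
Given `a_{k+1} ≤ Δ_k a_k + (η_k/2)(−1+Dη_k)e_k + B_k ∑_{t=k_p}^{k−1} η_t² e_t + c_k` on the
window `k_p ≤ k ≤ v_p`, and the stepsize conditions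
`η_{v_p} ≤ 1/D` and, for `k_p ≤ j < v_p`,
`η_j ≤ (D + 2(B_{v_p} + ∑_{i=j+1}^{v_p−1} B_i ∏_{l=i+1}^{v_p} Δ_l)/∏_{i=j+1}^{v_p} Δ_i)⁻¹`,
one gets `a_{v_p+1} ≤ (∏_{k=k_p}^{v_p} Δ_k) a_{k_p}
  + ∑_{k=k_p}^{v_p−1} (∏_{i=k+1}^{v_p} Δ_i) c_k + c_{v_p}`. -/
theorem stmt16_recursion_lemma
    (kp vp : ℕ) (hkv : kp ≤ vp) (D : ℝ) (hD : 0 < D)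
    (η Δ B c e : ℕ → ℝ) (a : ℕ → ℝ)
    (hη : ∀ k, kp ≤ k → k ≤ vp → 0 < η k)
    (hΔ : ∀ k, kp ≤ k → k ≤ vp → 0 < Δ k ∧ Δ k ≤ 1)
    (hB : ∀ k, kp ≤ k → k ≤ vp → 0 ≤ B k)
    (he : ∀ k, kp ≤ k → k ≤ vp → 0 ≤ e k)
    (hrec : ∀ k, kp ≤ k → k ≤ vp →
      a (k + 1) ≤ Δ k * a k + η k / 2 * (-1 + D * η k) * e k
        + B k * ∑ t ∈ Ico kp k, η t ^ 2 * e t + c k)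
    (hηvp : η vp ≤ 1 / D)
    (hηj : ∀ j, kp ≤ j → j < vp →
      η j ≤ (D + 2 * (B vp + ∑ i ∈ Ico (j + 1) vp, B i * ∏ l ∈ Ico (i + 1) (vp + 1), Δ l)
                 / ∏ i ∈ Ico (j + 1) (vp + 1), Δ i)⁻¹) :
    a (vp + 1) ≤ (∏ k ∈ Icc kp vp, Δ k) * a kp
      + ∑ k ∈ Ico kp vp, (∏ i ∈ Ico (k + 1) (vp + 1), Δ i) * c k + c vp := by
  set f : ℕ → ℝ := fun k => η k / 2 * (-1 + D * η k) * e k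
        + B k * ∑ t ∈ Ico kp k, η t ^ 2 * e t + c k with hf
  -- Step 1: unroll the recursion
  have unroll : ∀ n, kp ≤ n → n ≤ vp + 1 →
      a n ≤ (∏ i ∈ Ico kp n, Δ i) * a kp
        + ∑ k ∈ Ico kp n, (∏ i ∈ Ico (k + 1) n, Δ i) * f k := by
    intro n hn
    induction n, hn using Nat.le_induction with
    | base => intro _; simp
    | succ n hn ih =>
      intro hn1
      have hnvp : n ≤ vp := by omega
      have ih' := ih (by omega)
      have hrecn := hrec n hn hnvp
      have hΔn := (hΔ n hn hnvp).1
      calc a (n + 1) ≤ Δ n * a n + f n := by rw [hf]; linarith [hrecn]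
        _ ≤ Δ n * ((∏ i ∈ Ico kp n, Δ i) * a kp
              + ∑ k ∈ Ico kp n, (∏ i ∈ Ico (k + 1) n, Δ i) * f k) + f n := by
            nlinarith [ih']
        _ = (∏ i ∈ Ico kp (n + 1), Δ i) * a kp
              + ∑ k ∈ Ico kp (n + 1), (∏ i ∈ Ico (k + 1) (n + 1), Δ i) * f k := by
            have hterm : ∀ k ∈ Ico kp n, Δ n * ((∏ i ∈ Ico (k + 1) n, Δ i) * f k)
                = (∏ i ∈ Ico (k + 1) (n + 1), Δ i) * f k := by
              intro k hk
              rw [Finset.mem_Ico] at hk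
              rw [Finset.prod_Ico_succ_top (by omega : k + 1 ≤ n)]
              ring
            rw [Finset.prod_Ico_succ_top hn, Finset.sum_Ico_succ_top hn, mul_add,
              Finset.mul_sum, Finset.sum_congr rfl hterm]
            simp only [Finset.Ico_self, Finset.prod_empty, one_mul]
            ring
  have key := unroll (vp + 1) (by omega) le_rfl
  -- Step 2: split f into error part and c part
  have split : ∑ k ∈ Ico kp (vp + 1), (∏ i ∈ Ico (k + 1) (vp + 1), Δ i) * f k
      = (∑ k ∈ Ico kp (vp + 1), (∏ i ∈ Ico (k + 1) (vp + 1), Δ i)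
          * (η k / 2 * (-1 + D * η k) * e k))
        + (∑ k ∈ Ico kp (vp + 1), (∏ i ∈ Ico (k + 1) (vp + 1), Δ i)
          * (B k * ∑ t ∈ Ico kp k, η t ^ 2 * e t))
        + ∑ k ∈ Ico kp (vp + 1), (∏ i ∈ Ico (k + 1) (vp + 1), Δ i) * c k := by
    rw [← Finset.sum_add_distrib, ← Finset.sum_add_distrib]
    refine Finset.sum_congr rfl fun k _ => by rw [hf]; ring
  -- Step 3: swap the double sum
  have swap : ∑ k ∈ Ico kp (vp + 1), (∏ i ∈ Ico (k + 1) (vp + 1), Δ i)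
          * (B k * ∑ t ∈ Ico kp k, η t ^ 2 * e t)
      = ∑ t ∈ Ico kp (vp + 1), ∑ k ∈ Ico (t + 1) (vp + 1),
          (∏ i ∈ Ico (k + 1) (vp + 1), Δ i) * (B k * (η t ^ 2 * e t)) := by
    rw [Finset.sum_Ico_Ico_comm' kp (vp + 1)
      (fun t k => (∏ i ∈ Ico (k + 1) (vp + 1), Δ i) * (B k * (η t ^ 2 * e t)))]
    refine Finset.sum_congr rfl fun k _ => ?_
    rw [Finset.mul_sum, Finset.mul_sum]
  -- Step 4: the error part is nonpositive, termwise in t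
  have errnp : (∑ k ∈ Ico kp (vp + 1), (∏ i ∈ Ico (k + 1) (vp + 1), Δ i)
          * (η k / 2 * (-1 + D * η k) * e k))
        + (∑ k ∈ Ico kp (vp + 1), (∏ i ∈ Ico (k + 1) (vp + 1), Δ i)
          * (B k * ∑ t ∈ Ico kp k, η t ^ 2 * e t)) ≤ 0 := by
    rw [swap, ← Finset.sum_add_distrib]
    refine Finset.sum_nonpos fun t ht => ?_
    rw [Finset.mem_Ico] at ht
    have htvp : t ≤ vp := by omega
    have hηt := hη t ht.1 htvp
    have het := he t ht.1 htvp
    set Q : ℝ := ∏ i ∈ Ico (t + 1) (vp + 1), Δ i with hQ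
    have hQpos : 0 < Q := Finset.prod_pos fun i hi => by
      rw [Finset.mem_Ico] at hi; exact (hΔ i (by omega) (by omega)).1
    set S : ℝ := ∑ k ∈ Ico (t + 1) (vp + 1),
        (∏ i ∈ Ico (k + 1) (vp + 1), Δ i) * B k with hS
    have hSnn : 0 ≤ S := Finset.sum_nonneg fun k hk => by
      rw [Finset.mem_Ico] at hk
      exact mul_nonneg (Finset.prod_nonneg fun i hi => by
        rw [Finset.mem_Ico] at hi; exact le_of_lt (hΔ i (by omega) (by omega)).1)
        (hB k (by omega) (by omega))
    have hcoef : ∑ k ∈ Ico (t + 1) (vp + 1),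
          (∏ i ∈ Ico (k + 1) (vp + 1), Δ i) * (B k * (η t ^ 2 * e t))
        = S * (η t ^ 2 * e t) := by
      rw [hS, Finset.sum_mul]
      exact Finset.sum_congr rfl fun k _ => by ring
    rw [hcoef]
    -- key scalar inequality: η t * (Q * D + 2 * S) ≤ Q
    have hkey : η t * (Q * D + 2 * S) ≤ Q := by
      rcases eq_or_lt_of_le htvp with heq | hlt
      · -- t = vp : S = 0, Q = 1
        have hS0 : S = 0 := by rw [hS, heq]; simp
        have hQ1 : Q = 1 := by rw [hQ, heq]; simp
        have hηt' : η t ≤ 1 / D := heq ▸ hηvp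
        have h1 : η t * D ≤ 1 := by
          have := mul_le_mul_of_nonneg_right hηt' hD.le
          rwa [one_div, inv_mul_cancel₀ hD.ne'] at this
        rw [hS0, hQ1]
        nlinarith [h1]
      · have hj := hηj t ht.1 hlt
        have hSalt : S = B vp + ∑ i ∈ Ico (t + 1) vp,
            B i * ∏ l ∈ Ico (i + 1) (vp + 1), Δ l := by
          rw [hS, Finset.sum_Ico_succ_top (by omega : t + 1 ≤ vp)]
          simp only [Finset.Ico_self, Finset.prod_empty, one_mul]
          rw [add_comm]
          congr 1
          exact Finset.sum_congr rfl fun i _ => mul_comm _ _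
        have hden : 0 < D + 2 * S / Q := by positivity
        have hj2 : η t ≤ (D + 2 * S / Q)⁻¹ := by rw [hSalt, hQ]; exact hj
        have hj' : η t * (D + 2 * S / Q) ≤ 1 :=
          calc η t * (D + 2 * S / Q) ≤ (D + 2 * S / Q)⁻¹ * (D + 2 * S / Q) :=
                mul_le_mul_of_nonneg_right hj2 (le_of_lt hden)
            _ = 1 := inv_mul_cancel₀ (ne_of_gt hden)
        have h2 : η t * (Q * D + 2 * S) ≤ Q := by
          have hm := mul_le_mul_of_nonneg_left hj' (le_of_lt hQpos)
          calc η t * (Q * D + 2 * S) = Q * (η t * (D + 2 * S / Q)) := by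
                have hkeyQ : Q * (2 * S / Q) = 2 * S := by
                  rw [mul_div_assoc']
                  exact mul_div_cancel_left₀ _ (ne_of_gt hQpos)
                linear_combination - η t * hkeyQ
            _ ≤ Q * 1 := hm
            _ = Q := mul_one Q
        exact h2
    nlinarith [mul_nonneg (le_of_lt hηt) het, mul_nonneg (mul_nonneg (le_of_lt hηt) (le_of_lt hηt)) het]
  -- Step 5: assemble
  have hIccIco : Icc kp vp = Ico kp (vp + 1) := by
    ext x; simp [Nat.lt_succ_iff]
  have csum : ∑ k ∈ Ico kp (vp + 1), (∏ i ∈ Ico (k + 1) (vp + 1), Δ i) * c k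
      = ∑ k ∈ Ico kp vp, (∏ i ∈ Ico (k + 1) (vp + 1), Δ i) * c k + c vp := by
    rw [Finset.sum_Ico_succ_top hkv]
    simp
  rw [hIccIco]
  calc a (vp + 1) ≤ (∏ i ∈ Ico kp (vp + 1), Δ i) * a kp
        + ∑ k ∈ Ico kp (vp + 1), (∏ i ∈ Ico (k + 1) (vp + 1), Δ i) * f k := key
    _ ≤ (∏ i ∈ Ico kp (vp + 1), Δ i) * a kp
        + ∑ k ∈ Ico kp vp, (∏ i ∈ Ico (k + 1) (vp + 1), Δ i) * c k + c vp := by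
      rw [split, csum]
      linarith [errnp]
end
end

section
/- Let μ, L, λ, C_1, C_2, σ_1², B > 0, M ≥ 1 and τ ≥ 1 be given, set D := λL(C_1/M + C_2 + 1), and for k ≥ 0 define η_k := 1/(μ(k + βτ + 1)), Δ_k := 1 − μη_k, and B_k := (1/2)η_k L² λ (τ−1)(C_1+1). Suppose β > max{(2λL/μ)(C_1/M + C_2 + 1) − 2, 2L²λ(C_1+1)/μ², 1}, β²/e^{1/β} > 2L²λ(C_1+1)/μ², and τ ≥ √( max{(2L²λ(C_1+1)/μ²)e^{1/β} − 4, 0} / (β² − (2L²λ(C_1+1)/μ²)e^{1/β}) ). Then for every p ≥ 0, writing k_p := pτ and v_p := (p+1)τ − 1, the stepsize conditions hold: for every j with k_p ≤ j ≤ v_p, η_j ≤ (D + 2(B_{v_p} + Σ_{i=j+1}^{v_p−1} B_i ∏_{l=i+1}^{v_p} Δ_l)/∏_{i=j+1}^{v_p} Δ_i)^{−1} (empty sums zero, empty products one; for j = v_p this reads η_{v_p} ≤ 1/D). -/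
open Finset Real
noncomputable section

private lemma stmt17_alg (d c a v m ww : ℝ) (hm : m ≠ 0) (hv : v ≠ 0) (ha : a ≠ 0) :
    d + 2 * (c / (m * v) + (ww - 1) * (c / (m * v))) / (a / v)
      = d + 2 * ww * c / (m * a) := by
  field_simp
  ring

set_option maxHeartbeats 1000000 in
/-- Lemma 14 of the paper: the diminishing stepsizes
`η_k = 1/(μ(k + βτ + 1))` satisfy, on every communication block `[pτ, (p+1)τ − 1]`, the
stepsize conditions of the recursion lemma with `Δ_k = 1 − μη_k`,
`B_k = (1/2)η_k L² λ (τ−1)(C_1+1)` and `D = λL(C_1/M + C_2 + 1)`, provided `β` and `τ` are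
large enough as specified. -/
theorem stmt17_stepsize_conditions
    (μ L lam C1 C2 σ1sq Bsz : ℝ) (M τ : ℕ)
    (hμ : 0 < μ) (hL : 0 < L) (hlam : 0 < lam) (hC1 : 0 < C1) (hC2 : 0 < C2)
    (hσ1 : 0 < σ1sq) (hBsz : 0 < Bsz) (hM : 1 ≤ M) (hτ : 1 ≤ τ)
    (bet : ℝ)
    (hbet : max (max (2 * lam * L / μ * (C1 / M + C2 + 1) - 2)
      (2 * L ^ 2 * lam * (C1 + 1) / μ ^ 2)) 1 < bet)
    (hbet2 : 2 * L ^ 2 * lam * (C1 + 1) / μ ^ 2 < bet ^ 2 / Real.exp (1 / bet))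
    (hτ2 : Real.sqrt (max ((2 * L ^ 2 * lam * (C1 + 1) / μ ^ 2) * Real.exp (1 / bet) - 4) 0
      / (bet ^ 2 - (2 * L ^ 2 * lam * (C1 + 1) / μ ^ 2) * Real.exp (1 / bet))) ≤ (τ : ℝ))
    (η Δ B : ℕ → ℝ) (D : ℝ)
    (hηdef : ∀ k : ℕ, η k = 1 / (μ * ((k : ℝ) + bet * τ + 1)))
    (hΔdef : ∀ k : ℕ, Δ k = 1 - μ * η k)
    (hBdef : ∀ k : ℕ, B k = 1 / 2 * η k * L ^ 2 * lam * ((τ : ℝ) - 1) * (C1 + 1))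
    (hDdef : D = lam * L * (C1 / M + C2 + 1)) :
    ∀ p : ℕ,
      (let vp := (p + 1) * τ - 1;
       η vp ≤ 1 / D
       ∧ ∀ j, p * τ ≤ j → j < vp →
          η j ≤ (D + 2 * (B vp + ∑ i ∈ Ico (j + 1) vp, B i * ∏ l ∈ Ico (i + 1) (vp + 1), Δ l)
                     / ∏ i ∈ Ico (j + 1) (vp + 1), Δ i)⁻¹) := by
  -- basic facts
  have hβ1 : (1:ℝ) < bet := lt_of_le_of_lt (le_max_right _ _) hbet
  have hβ0 : (0:ℝ) < bet := by linarith
  have hτR : (1:ℝ) ≤ (τ:ℝ) := by exact_mod_cast hτ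
  have hbτ : (0:ℝ) < bet * τ := by positivity
  have hMR : (1:ℝ) ≤ (M:ℝ) := by exact_mod_cast hM
  have hM0 : (0:ℝ) < (M:ℝ) := by linarith
  have hDpos : 0 < D := by rw [hDdef]; positivity
  have hD2 : 2 * lam * L / μ * (C1 / M + C2 + 1) - 2 < bet :=
    lt_of_le_of_lt (le_trans (le_max_left _ _) (le_max_left _ _)) hbet
  have hKb : 2 * L ^ 2 * lam * (C1 + 1) / μ ^ 2 < bet :=
    lt_of_le_of_lt (le_trans (le_max_right _ _) (le_max_left _ _)) hbet
  -- 2D ≤ μ(β+2)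
  have hDle : 2 * D ≤ μ * (bet + 2) := by
    have h2 : 2 * (lam * L * (C1 / M + C2 + 1)) / μ < bet + 2 := by
      have : 2 * lam * L / μ * (C1 / M + C2 + 1) = 2 * (lam * L * (C1 / M + C2 + 1)) / μ := by
        ring
      linarith [this ▸ hD2]
    rw [hDdef]
    have := (div_lt_iff₀ hμ).mp h2
    nlinarith [this]
  -- 2L²λ(C1+1) ≤ β²μ²
  have hKμ : 2 * L ^ 2 * lam * (C1 + 1) ≤ bet ^ 2 * μ ^ 2 := by
    have hμ2 : (0:ℝ) < μ ^ 2 := by positivity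
    have h := (div_lt_iff₀ hμ2).mp hKb
    have hbb : bet * μ ^ 2 ≤ bet ^ 2 * μ ^ 2 :=
      mul_le_mul_of_nonneg_right
        (by linarith [mul_le_mul_of_nonneg_left hβ1.le hβ0.le]) (sq_nonneg μ)
    linarith
  have hpos : ∀ n : ℕ, (0:ℝ) < (n:ℝ) + bet * τ := fun n => by positivity
  have hpos1 : ∀ n : ℕ, (0:ℝ) < (n:ℝ) + bet * τ + 1 := fun n => by positivity
  -- Δ formula
  have hΔ : ∀ n : ℕ, Δ n = ((n:ℝ) + bet * τ) / ((n:ℝ) + bet * τ + 1) := by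
    intro n
    rw [hΔdef, hηdef]
    have h := (hpos1 n).ne'
    field_simp
    ring
  -- telescoping products
  have tele : ∀ m n : ℕ, m ≤ n →
      ∏ i ∈ Ico m n, Δ i = ((m:ℝ) + bet * τ) / ((n:ℝ) + bet * τ) := by
    intro m n hmn
    induction n, hmn using Nat.le_induction with
    | base => simp [div_self (hpos m).ne']
    | succ n hmn ih =>
      rw [Finset.prod_Ico_succ_top hmn, ih, hΔ n]
      have h1 := (hpos n).ne'
      have h2 := (hpos1 n).ne'
      have h3 : ((n+1:ℕ):ℝ) + bet * τ = (n:ℝ) + bet * τ + 1 := by push_cast; ring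
      rw [h3]
      field_simp
  intro p
  set vp := (p + 1) * τ - 1 with hvpdef
  have hvp1 : 1 ≤ (p + 1) * τ := le_trans hτ (Nat.le_mul_of_pos_left τ (Nat.succ_pos p))
  have hvpR : (vp:ℝ) = ((p:ℝ) + 1) * τ - 1 := by
    rw [hvpdef]
    push_cast [Nat.cast_sub hvp1]
    ring
  constructor
  · -- η vp ≤ 1/D
    rw [hηdef]
    have hle : D ≤ μ * ((vp:ℝ) + bet * τ + 1) := by
      have h0 : (0:ℝ) ≤ (vp:ℝ) := Nat.cast_nonneg _
      have hb : bet ≤ bet * τ := by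
        have := mul_le_mul_of_nonneg_left hτR hβ0.le
        linarith [this]
      have h1 : bet + 2 ≤ 2 * ((vp:ℝ) + bet * τ + 1) := by linarith
      have h2 := mul_le_mul_of_nonneg_left h1 hμ.le
      linarith
    exact one_div_le_one_div_of_le hDpos hle
  · intro j hj hjlt
    have hj1 : j + 1 ≤ vp := hjlt
    -- abbreviations
    set A : ℝ := (j:ℝ) + bet * τ + 1 with hA
    set V : ℝ := (vp:ℝ) + bet * τ + 1 with hV
    set cnum : ℝ := 1 / 2 * L ^ 2 * lam * ((τ:ℝ) - 1) * (C1 + 1) with hcnum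
    have hApos : 0 < A := hpos1 j
    have hVpos : 0 < V := hpos1 vp
    have hcnum0 : 0 ≤ cnum := by
      rw [hcnum]
      have : (0:ℝ) ≤ (τ:ℝ) - 1 := by linarith
      positivity
    -- each summand is constant
    have hterm : ∀ i ∈ Ico (j + 1) vp,
        B i * ∏ l ∈ Ico (i + 1) (vp + 1), Δ l = cnum / (μ * V) := by
      intro i hi
      rw [mem_Ico] at hi
      have h1 : i + 1 ≤ vp + 1 := by omega
      rw [tele (i+1) (vp+1) h1, hBdef, hηdef]
      have h2 : ((i+1:ℕ):ℝ) + bet * τ = (i:ℝ) + bet * τ + 1 := by push_cast; ring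
      have h3 : ((vp+1:ℕ):ℝ) + bet * τ = V := by rw [hV]; push_cast; ring
      rw [h2, h3, hcnum]
      have h4 := (hpos1 i).ne'
      have h5 := hVpos.ne'
      have h6 := hμ.ne'
      field_simp
    have hsum : ∑ i ∈ Ico (j + 1) vp, B i * ∏ l ∈ Ico (i + 1) (vp + 1), Δ l
        = ((vp:ℝ) - (j:ℝ) - 1) * (cnum / (μ * V)) := by
      rw [Finset.sum_congr rfl hterm, Finset.sum_const, Nat.card_Ico, nsmul_eq_mul]
      congr 1
      have : ((vp - (j+1) : ℕ) : ℝ) = (vp:ℝ) - (j:ℝ) - 1 := by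
        push_cast [Nat.cast_sub hj1]; ring
      rw [this]
    have hBvp : B vp = cnum / (μ * V) := by
      rw [hBdef, hηdef, hcnum, hV]
      ring
    have hprod : ∏ i ∈ Ico (j + 1) (vp + 1), Δ i = A / V := by
      rw [tele (j+1) (vp+1) (by omega), hA, hV]
      push_cast
      ring
    set w : ℝ := (vp:ℝ) - (j:ℝ) with hw
    have hw1 : (1:ℝ) ≤ w := by
      rw [hw]
      have : (j:ℝ) + 1 ≤ (vp:ℝ) := by exact_mod_cast hj1
      linarith
    have hwτ : w ≤ (τ:ℝ) - 1 := by
      rw [hw, hvpR]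
      have hjR : (p:ℝ) * τ ≤ (j:ℝ) := by exact_mod_cast hj
      linarith
    -- simplify the RHS
    have hE : D + 2 * (B vp + ∑ i ∈ Ico (j + 1) vp, B i * ∏ l ∈ Ico (i + 1) (vp + 1), Δ l)
          / ∏ i ∈ Ico (j + 1) (vp + 1), Δ i = D + 2 * w * cnum / (μ * A) := by
      rw [hsum, hBvp, hprod]
      exact stmt17_alg D cnum A V μ w hμ.ne' hVpos.ne' hApos.ne'
    rw [hE, hηdef]
    have hEpos : 0 < D + 2 * w * cnum / (μ * A) := by
      have : 0 ≤ 2 * w * cnum / (μ * A) := by positivity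
      linarith
    rw [show ((j:ℝ) + bet * τ + 1) = A from rfl, inv_eq_one_div]
    apply one_div_le_one_div_of_le hEpos
    -- main inequality: D + 2 w cnum/(μA) ≤ μ A
    have hμA : 0 < μ * A := by positivity
    have hsplit : D + 2 * w * cnum / (μ * A) = (D * (μ * A) + 2 * w * cnum) / (μ * A) := by
      field_simp
    rw [hsplit, div_le_iff₀ hμA]
    -- need : D*(μ*A) + 2*w*cnum ≤ (μ*A)^2, stated up to ring_nf
    have hAlb : bet * τ + 1 ≤ A := by
      rw [hA]
      have : (0:ℝ) ≤ (j:ℝ) := Nat.cast_nonneg _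
      linarith
    have hbτ' : bet ≤ bet * τ := by
      have := mul_le_mul_of_nonneg_left hτR hβ0.le
      linarith [this]
    have key : (bet + 2) * A + bet ^ 2 * ((τ:ℝ) - 1) ^ 2 ≤ 2 * A ^ 2 := by
      have t1 : 0 ≤ (A - (bet * τ + 1)) * (2 * (A + (bet * τ + 1)) - (bet + 2)) := by
        apply mul_nonneg (sub_nonneg.2 hAlb)
        linarith [hAlb, hbτ', hβ0]
      have t2 : 0 ≤ bet ^ 2 * ((τ:ℝ) - 1) * ((τ:ℝ) + 1) :=
        mul_nonneg (mul_nonneg (sq_nonneg bet) (by linarith)) (by linarith)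
      have t3 : 0 ≤ bet ^ 2 * (τ:ℝ) := mul_nonneg (sq_nonneg bet) (by linarith)
      linarith [t1, t2, t3, hbτ', hβ0]
    -- bound 4 w cnum
    have hw0 : (0:ℝ) ≤ w := by linarith
    have hτ1 : (0:ℝ) ≤ (τ:ℝ) - 1 := by linarith
    have h4c : 4 * cnum ≤ bet ^ 2 * μ ^ 2 * ((τ:ℝ) - 1) := by
      have := mul_le_mul_of_nonneg_right hKμ hτ1
      rw [hcnum]
      linarith [this]
    have hwc : 4 * (w * cnum) ≤ bet ^ 2 * μ ^ 2 * ((τ:ℝ) - 1) ^ 2 := by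
      have a1 := mul_le_mul_of_nonneg_left h4c hw0
      have a2 := mul_le_mul_of_nonneg_right hwτ
        (mul_nonneg (mul_nonneg (sq_nonneg bet) (sq_nonneg μ)) hτ1)
      linarith [a1, a2]
    have hDA : 2 * (D * (μ * A)) ≤ μ ^ 2 * (bet + 2) * A := by
      have := mul_le_mul_of_nonneg_right hDle (mul_pos hμ hApos).le
      linarith [this]
    have keyμ := mul_le_mul_of_nonneg_left key (sq_nonneg μ)
    linarith [keyμ, hwc, hDA]
end
end

section
/- Let H : ℝ^{d_x} × ℝ^{d_y} → ℝ be twice continuously differentiable and (jointly) convex, and suppose that for all (x,y) the diagonal Hessian blocks satisfy ∇²_{xx}H(x,y) ⪯ L_x·I_{d_x} and ∇²_{yy}H(x,y) ⪯ L_y·I_{d_y} with L_x, L_y > 0. Then: (i) ∇²H(x,y) ⪯ 2·diag(L_x·I_{d_x}, L_y·I_{d_y}) for all (x,y); and (ii) for all (x,y), (x',y'), the Bregman divergence D_H((x,y),(x',y')) := H(x,y) − H(x',y') − ⟨∇H(x',y'), (x,y) − (x',y')⟩ satisfies D_H((x,y),(x',y')) ≥ (1/(4L_x))‖∇_x H(x,y)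 − ∇_x H(x',y')‖² + (1/(4L_y))‖∇_y H(x,y) − ∇_y H(x',y')‖². -/
open Real InnerProductSpace
open scoped InnerProductSpace
noncomputable section

variable {G : Type*} [NormedAddCommGroup G] [InnerProductSpace ℝ G] [CompleteSpace G]

lemma grad_inner (f : G → ℝ) (x v : G) : ⟪gradient f x, v⟫_ℝ = fderiv ℝ f x v := by
  simp [gradient, toDual_symm_apply]

lemma line_hasDerivAt {f : G → ℝ} (a v : G) (s : ℝ) (hf : DifferentiableAt ℝ f (a + s • v)) :
    HasDerivAt (fun t : ℝ => f (a + t • v)) ⟪gradient f (a + s • v), v⟫_ℝ s := by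
  have hline : HasDerivAt (fun t : ℝ => a + t • v) v s := by
    simpa using ((hasDerivAt_id s).smul_const v).const_add a
  have := hf.hasFDerivAt.comp_hasDerivAt s hline
  simpa [grad_inner, Function.comp_def] using this

lemma grad_mono {f : G → ℝ} (hf : Differentiable ℝ f) (hconv : ConvexOn ℝ Set.univ f)
    (a b : G) : 0 ≤ ⟪gradient f b - gradient f a, b - a⟫_ℝ := by
  set k : ℝ → ℝ := fun t => f (a + t • (b - a)) with hk
  have hconvk : ConvexOn ℝ Set.univ k := by
    have h := hconv.comp_affineMap (AffineMap.lineMap a b)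
    have he : f ∘ (AffineMap.lineMap a b) = k := funext fun t => by
      show f _ = f _
      congr 1
      simp [AffineMap.lineMap_apply]
      abel
    rw [he] at h
    simpa using h
  have hd : ∀ s : ℝ, HasDerivAt k ⟪gradient f (a + s • (b - a)), b - a⟫_ℝ s := fun s =>
    line_hasDerivAt a (b - a) s (hf _)
  have h0 : deriv k 0 = ⟪gradient f a, b - a⟫_ℝ := by
    simpa using (hd 0).deriv
  have h1 : deriv k 1 = ⟪gradient f b, b - a⟫_ℝ := by
    have := (hd 1).deriv
    simpa using this
  have hslope1 : deriv k 0 ≤ slope k 0 1 :=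
    hconvk.deriv_le_slope (Set.mem_univ 0) (Set.mem_univ 1) one_pos (hd 0).differentiableAt
  have hslope2 : slope k 0 1 ≤ deriv k 1 :=
    hconvk.slope_le_deriv (Set.mem_univ 0) (Set.mem_univ 1) one_pos (hd 1).differentiableAt
  have := hslope1.trans hslope2
  rw [h0, h1] at this
  rw [inner_sub_left]
  linarith

lemma grad_contDiff {f : G → ℝ} (hf : ContDiff ℝ 2 f) : ContDiff ℝ 1 (gradient f) := by
  have h1 : ContDiff ℝ 1 (fderiv ℝ f) := hf.fderiv_right (by norm_num)
  have h2 : ContDiff ℝ 1 ((toDual ℝ G).symm : StrongDual ℝ G → G) :=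
    (toDual ℝ G).symm.contDiff
  exact h2.comp h1

lemma hess_line_hasDerivAt {f : G → ℝ} (hf : ContDiff ℝ 2 f) (a v : G) (s : ℝ) :
    HasDerivAt (fun t : ℝ => ⟪gradient f (a + t • v), v⟫_ℝ)
      ⟪fderiv ℝ (gradient f) (a + s • v) v, v⟫_ℝ s := by
  have hline : HasDerivAt (fun t : ℝ => a + t • v) v s := by
    simpa using ((hasDerivAt_id s).smul_const v).const_add a
  have hg : DifferentiableAt ℝ (gradient f) (a + s • v) :=
    ((grad_contDiff hf).differentiable one_ne_zero) _
  have h1 : HasDerivAt (fun t : ℝ => gradient f (a + t • v))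
      (fderiv ℝ (gradient f) (a + s • v) v) s := by
    have := hg.hasFDerivAt.comp_hasDerivAt s hline
    exact this
  have h2 := ((innerSL ℝ v).hasFDerivAt.comp_hasDerivAt s h1)
  simpa [real_inner_comm, Function.comp_def] using h2

lemma hess_psd {f : G → ℝ} (hf : ContDiff ℝ 2 f) (hconv : ConvexOn ℝ Set.univ f)
    (x v : G) : 0 ≤ ⟪v, fderiv ℝ (gradient f) x v⟫_ℝ := by
  have hdiff : Differentiable ℝ f := hf.differentiable (by norm_num)
  set φ : ℝ → ℝ := fun t => ⟪gradient f (x + t • v), v⟫_ℝ with hφ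
  have hmono : Monotone φ := by
    intro s t hst
    rcases eq_or_lt_of_le hst with rfl | hlt
    · exact le_rfl
    have := grad_mono hdiff hconv (x + s • v) (x + t • v)
    have harg : (x + t • v) - (x + s • v) = (t - s) • v := by
      rw [sub_smul]; abel
    rw [harg, real_inner_smul_right] at this
    have : 0 ≤ ⟪gradient f (x + t • v) - gradient f (x + s • v), v⟫_ℝ := by
      by_contra hneg
      push_neg at hneg
      nlinarith
    rw [inner_sub_left] at this
    simpa [hφ] using this
  have hder : HasDerivAt φ ⟪fderiv ℝ (gradient f) x v, v⟫_ℝ 0 := by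
    have := hess_line_hasDerivAt hf x v 0
    simpa [hφ, grad_inner] using this
  rw [real_inner_comm]
  have hslope := hasDerivAt_iff_tendsto_slope.mp hder
  refine ge_of_tendsto hslope ?_
  filter_upwards [self_mem_nhdsWithin] with t ht
  rcases lt_or_gt_of_ne (Set.mem_compl_singleton_iff.mp ht) with hlt | hgt
  · have := hmono hlt.le
    rw [slope_def_field]
    have : φ t - φ 0 ≤ 0 := by linarith [hmono hlt.le]
    have hden : t - 0 < 0 := by linarith
    exact div_nonneg_of_nonpos (by linarith) (by linarith)
  · rw [slope_def_field]
    have : 0 ≤ φ t - φ 0 := by linarith [hmono hgt.le]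
    exact div_nonneg (by linarith) (by linarith)

lemma descent_lemma {f : G → ℝ} (hf : ContDiff ℝ 2 f) (x w : G) (C : ℝ)
    (hC : ∀ t ∈ Set.Icc (0:ℝ) 1, ⟪w, fderiv ℝ (gradient f) (x + t • w) w⟫_ℝ ≤ C) :
    f (x + w) ≤ f x + ⟪gradient f x, w⟫_ℝ + C / 2 := by
  have hdiff : Differentiable ℝ f := hf.differentiable (by norm_num)
  set φ : ℝ → ℝ := fun t => ⟪gradient f (x + t • w), w⟫_ℝ with hφdef
  have hφ : ∀ s : ℝ, HasDerivAt φ ⟪fderiv ℝ (gradient f) (x + s • w) w, w⟫_ℝ s := fun s =>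
    hess_line_hasDerivAt hf x w s
  have hψ : ∀ s : ℝ, HasDerivAt (fun t : ℝ => f (x + t • w)) (φ s) s := fun s =>
    line_hasDerivAt x w s (hdiff _)
  -- step 1 : φ t ≤ φ 0 + C * t on [0,1]
  have hχ : ∀ s : ℝ, HasDerivAt (fun t => φ t - C * t)
      (⟪fderiv ℝ (gradient f) (x + s • w) w, w⟫_ℝ - C) s := fun s => by
    have hid : HasDerivAt (fun t : ℝ => C * t) C s := by
      simpa using (hasDerivAt_id s).const_mul C
    exact (hφ s).sub hid
  have hχanti : AntitoneOn (fun t => φ t - C * t) (Set.Icc 0 1) := by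
    apply antitoneOn_of_deriv_nonpos (convex_Icc 0 1)
    · exact (Continuous.continuousOn (by
        exact continuous_iff_continuousAt.mpr fun s => ((hχ s).differentiableAt).continuousAt))
    · intro s _
      exact ((hχ s).differentiableAt).differentiableWithinAt
    · intro s hs
      rw [(hχ s).deriv]
      have := hC s (Set.mem_Icc_of_Ioo (by simpa using hs))
      rw [real_inner_comm] at this
      linarith
  have hstep1 : ∀ t ∈ Set.Icc (0:ℝ) 1, φ t ≤ φ 0 + C * t := by
    intro t ht
    have := hχanti (Set.left_mem_Icc.mpr zero_le_one) ht ht.1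
    simp only [mul_zero, sub_zero] at this
    linarith
  -- step 2 : θ antitone
  have hθ : ∀ s : ℝ, HasDerivAt (fun t : ℝ => f (x + t • w) - φ 0 * t - C * t ^ 2 / 2)
      (φ s - φ 0 - C * s) s := fun s => by
    have hid : HasDerivAt (fun t : ℝ => φ 0 * t) (φ 0) s := by
      simpa using (hasDerivAt_id s).const_mul (φ 0)
    have h1 := (hψ s).sub hid
    have h2 : HasDerivAt (fun t : ℝ => C * t ^ 2 / 2) (C * s) s := by
      have h := ((hasDerivAt_pow 2 s).const_mul C).div_const 2
      refine h.congr_deriv ?_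
      push_cast
      ring
    simpa [Pi.sub_def] using h1.sub h2
  have hθanti : AntitoneOn (fun t : ℝ => f (x + t • w) - φ 0 * t - C * t ^ 2 / 2)
      (Set.Icc 0 1) := by
    apply antitoneOn_of_deriv_nonpos (convex_Icc 0 1)
    · exact (Continuous.continuousOn (by
        exact continuous_iff_continuousAt.mpr fun s => ((hθ s).differentiableAt).continuousAt))
    · intro s _
      exact ((hθ s).differentiableAt).differentiableWithinAt
    · intro s hs
      rw [(hθ s).deriv]
      have hs' : s ∈ Set.Icc (0:ℝ) 1 := Set.mem_Icc_of_Ioo (by simpa using hs)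
      have := hstep1 s hs'
      linarith
  have hfin := hθanti (Set.left_mem_Icc.mpr zero_le_one)
      (Set.right_mem_Icc.mpr zero_le_one) zero_le_one
  simp only [zero_smul, add_zero, mul_zero, mul_one, one_smul, one_pow] at hfin
  have hφ0 : φ 0 = ⟪gradient f x, w⟫_ℝ := by simp [hφdef]
  rw [hφ0] at hfin
  linarith

lemma min_of_grad_zero {f : G → ℝ} (hdiff : Differentiable ℝ f)
    (hconv : ConvexOn ℝ Set.univ f) {m : G} (hm : gradient f m = 0) (z : G) : f m ≤ f z := by
  set k : ℝ → ℝ := fun t => f (m + t • (z - m)) with hk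
  have hd : ∀ s : ℝ, HasDerivAt k ⟪gradient f (m + s • (z - m)), z - m⟫_ℝ s := fun s =>
    line_hasDerivAt m (z - m) s (hdiff _)
  obtain ⟨c, hc, hceq⟩ := exists_hasDerivAt_eq_slope k
    (fun s => ⟪gradient f (m + s • (z - m)), z - m⟫_ℝ) one_pos
    (Continuous.continuousOn (continuous_iff_continuousAt.mpr fun s =>
      ((hd s).differentiableAt).continuousAt))
    (fun s _ => hd s)
  have hpos : 0 ≤ ⟪gradient f (m + c • (z - m)), z - m⟫_ℝ := by
    have := grad_mono hdiff hconv m (m + c • (z - m))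
    rw [hm] at this
    simp only [sub_zero, add_sub_cancel_left] at this
    rw [real_inner_smul_right] at this
    by_contra hneg
    push_neg at hneg
    nlinarith [hc.1]
  rw [hceq] at hpos
  have h0 : k 0 = f m := by simp [hk]
  have h1 : k 1 = f z := by simp [hk]
  rw [h0, h1] at hpos
  simp only [sub_zero, div_one] at hpos
  linarith


section prod

variable {dx dy : ℕ}

local notation "EE" => WithLp 2 (Vec dx × Vec dy)

def Jx (dx dy : ℕ) : Vec dx →L[ℝ] WithLp 2 (Vec dx × Vec dy) :=
  ((WithLp.prodContinuousLinearEquiv 2 ℝ (Vec dx) (Vec dy)).symm :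
      Vec dx × Vec dy →L[ℝ] WithLp 2 (Vec dx × Vec dy)).comp
    (ContinuousLinearMap.inl ℝ (Vec dx) (Vec dy))

def Jy (dx dy : ℕ) : Vec dy →L[ℝ] WithLp 2 (Vec dx × Vec dy) :=
  ((WithLp.prodContinuousLinearEquiv 2 ℝ (Vec dx) (Vec dy)).symm :
      Vec dx × Vec dy →L[ℝ] WithLp 2 (Vec dx × Vec dy)).comp
    (ContinuousLinearMap.inr ℝ (Vec dx) (Vec dy))

lemma Jx_fst (v : Vec dx) : (Jx dx dy v).ofLp.1 = v := rfl
lemma Jx_snd (v : Vec dx) : (Jx dx dy v).ofLp.2 = 0 := rfl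
lemma Jy_fst (v : Vec dy) : (Jy dx dy v).ofLp.1 = 0 := rfl
lemma Jy_snd (v : Vec dy) : (Jy dx dy v).ofLp.2 = v := rfl

lemma Jx_add_Jy (v : EE) : Jx dx dy v.ofLp.1 + Jy dx dy v.ofLp.2 = v := by
  apply WithLp.ofLp_injective
  apply Prod.ext <;> simp only [WithLp.ofLp_add, Prod.fst_add, Prod.snd_add, Jx_fst, Jx_snd, Jy_fst, Jy_snd, add_zero, zero_add]

lemma hasFDerivAt_inclx (y : Vec dy) (x : Vec dx) :
    HasFDerivAt (fun u : Vec dx => ((WithLp.equiv 2 (Vec dx × Vec dy)).symm (u, y) : EE))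
      (Jx dx dy) x := by
  have h1 : HasFDerivAt (fun u : Vec dx => (u, y))
      (ContinuousLinearMap.inl ℝ (Vec dx) (Vec dy)) x :=
    (hasFDerivAt_id x).prodMk (hasFDerivAt_const y x)
  have h2 := ((WithLp.prodContinuousLinearEquiv 2 ℝ (Vec dx) (Vec dy)).symm :
      Vec dx × Vec dy →L[ℝ] EE).hasFDerivAt.comp x h1
  exact h2

lemma hasFDerivAt_incly (x : Vec dx) (y : Vec dy) :
    HasFDerivAt (fun u : Vec dy => ((WithLp.equiv 2 (Vec dx × Vec dy)).symm (x, u) : EE))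
      (Jy dx dy) y := by
  have h1 : HasFDerivAt (fun u : Vec dy => (x, u))
      (ContinuousLinearMap.inr ℝ (Vec dx) (Vec dy)) y :=
    (hasFDerivAt_const x y).prodMk (hasFDerivAt_id y)
  have h2 := ((WithLp.prodContinuousLinearEquiv 2 ℝ (Vec dx) (Vec dy)).symm :
      Vec dx × Vec dy →L[ℝ] EE).hasFDerivAt.comp y h1
  exact h2


variable (H : Vec dx → Vec dy → ℝ)

lemma grad_fst (hF : Differentiable ℝ (fun p : EE => H p.ofLp.1 p.ofLp.2)) (x : Vec dx) (y : Vec dy) :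
    gradient (fun u => H u y) x
      = (gradient (fun p : EE => H p.ofLp.1 p.ofLp.2) ((WithLp.equiv 2 _).symm (x, y))).ofLp.1 := by
  set F := fun p : EE => H p.ofLp.1 p.ofLp.2 with hF'
  set p : EE := (WithLp.equiv 2 _).symm (x, y) with hp
  have hcomp : HasFDerivAt (fun u : Vec dx => H u y)
      ((fderiv ℝ F p).comp (Jx dx dy)) x :=
    by have h := (hF p).hasFDerivAt.comp x (hasFDerivAt_inclx y x); exact h
  apply ext_inner_right ℝ
  intro v
  rw [grad_inner, hcomp.fderiv, ContinuousLinearMap.comp_apply, ← grad_inner,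
    WithLp.prod_inner_apply]
  rw [Jx_fst, Jx_snd]
  simp

lemma grad_snd (hF : Differentiable ℝ (fun p : EE => H p.ofLp.1 p.ofLp.2)) (x : Vec dx) (y : Vec dy) :
    gradient (fun u => H x u) y
      = (gradient (fun p : EE => H p.ofLp.1 p.ofLp.2) ((WithLp.equiv 2 _).symm (x, y))).ofLp.2 := by
  set F := fun p : EE => H p.ofLp.1 p.ofLp.2 with hF'
  set p : EE := (WithLp.equiv 2 _).symm (x, y) with hp
  have hcomp : HasFDerivAt (fun u : Vec dy => H x u)
      ((fderiv ℝ F p).comp (Jy dx dy)) y :=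
    by have h := (hF p).hasFDerivAt.comp y (hasFDerivAt_incly x y); exact h
  apply ext_inner_right ℝ
  intro v
  rw [grad_inner, hcomp.fderiv, ContinuousLinearMap.comp_apply, ← grad_inner,
    WithLp.prod_inner_apply]
  rw [Jy_fst, Jy_snd]
  simp

def FstCLM (dx dy : ℕ) : WithLp 2 (Vec dx × Vec dy) →L[ℝ] Vec dx :=
  (ContinuousLinearMap.fst ℝ (Vec dx) (Vec dy)).comp
    ((WithLp.prodContinuousLinearEquiv 2 ℝ (Vec dx) (Vec dy) :
      WithLp 2 (Vec dx × Vec dy) →L[ℝ] Vec dx × Vec dy))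

def SndCLM (dx dy : ℕ) : WithLp 2 (Vec dx × Vec dy) →L[ℝ] Vec dy :=
  (ContinuousLinearMap.snd ℝ (Vec dx) (Vec dy)).comp
    ((WithLp.prodContinuousLinearEquiv 2 ℝ (Vec dx) (Vec dy) :
      WithLp 2 (Vec dx × Vec dy) →L[ℝ] Vec dx × Vec dy))

lemma hess_fst (hC2 : ContDiff ℝ 2 (fun p : EE => H p.ofLp.1 p.ofLp.2)) (x : Vec dx) (y : Vec dy)
    (v : Vec dx) :
    ⟪v, fderiv ℝ (fun x' => gradient (fun u => H u y) x') x v⟫_ℝ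
      = ⟪Jx dx dy v, fderiv ℝ (gradient (fun p : EE => H p.ofLp.1 p.ofLp.2))
          ((WithLp.equiv 2 _).symm (x, y)) (Jx dx dy v)⟫_ℝ := by
  set F := fun p : EE => H p.ofLp.1 p.ofLp.2 with hF'
  set p : EE := (WithLp.equiv 2 _).symm (x, y) with hp
  have hdiff : Differentiable ℝ F := hC2.differentiable (by norm_num)
  have hfun : (fun x' : Vec dx => gradient (fun u => H u y) x')
      = fun x' : Vec dx => FstCLM dx dy (gradient F ((WithLp.equiv 2 _).symm (x', y))) :=
    funext fun x' => grad_fst H hdiff x' y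
  have hgd : HasFDerivAt (gradient F) (fderiv ℝ (gradient F) p) p :=
    (((grad_contDiff hC2).differentiable one_ne_zero) p).hasFDerivAt
  have hcomp : HasFDerivAt
      (fun x' : Vec dx => FstCLM dx dy (gradient F ((WithLp.equiv 2 _).symm (x', y))))
      ((FstCLM dx dy).comp ((fderiv ℝ (gradient F) p).comp (Jx dx dy))) x :=
    by have h := hgd.comp x (hasFDerivAt_inclx y x); exact (FstCLM dx dy).hasFDerivAt.comp x h
  rw [hfun, hcomp.fderiv]
  rw [WithLp.prod_inner_apply]
  simp only [ContinuousLinearMap.comp_apply, Jx_fst, Jx_snd, inner_zero_left, add_zero]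
  rfl

lemma hess_snd (hC2 : ContDiff ℝ 2 (fun p : EE => H p.ofLp.1 p.ofLp.2)) (x : Vec dx) (y : Vec dy)
    (v : Vec dy) :
    ⟪v, fderiv ℝ (fun y' => gradient (fun u => H x u) y') y v⟫_ℝ
      = ⟪Jy dx dy v, fderiv ℝ (gradient (fun p : EE => H p.ofLp.1 p.ofLp.2))
          ((WithLp.equiv 2 _).symm (x, y)) (Jy dx dy v)⟫_ℝ := by
  set F := fun p : EE => H p.ofLp.1 p.ofLp.2 with hF'
  set p : EE := (WithLp.equiv 2 _).symm (x, y) with hp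
  have hdiff : Differentiable ℝ F := hC2.differentiable (by norm_num)
  have hfun : (fun y' : Vec dy => gradient (fun u => H x u) y')
      = fun y' : Vec dy => SndCLM dx dy (gradient F ((WithLp.equiv 2 _).symm (x, y'))) :=
    funext fun y' => grad_snd H hdiff x y'
  have hgd : HasFDerivAt (gradient F) (fderiv ℝ (gradient F) p) p :=
    (((grad_contDiff hC2).differentiable one_ne_zero) p).hasFDerivAt
  have hcomp : HasFDerivAt
      (fun y' : Vec dy => SndCLM dx dy (gradient F ((WithLp.equiv 2 _).symm (x, y'))))
      ((SndCLM dx dy).comp ((fderiv ℝ (gradient F) p).comp (Jy dx dy))) y :=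
    by have h := hgd.comp y (hasFDerivAt_incly x y); exact (SndCLM dx dy).hasFDerivAt.comp y h
  rw [hfun, hcomp.fderiv]
  rw [WithLp.prod_inner_apply]
  simp only [ContinuousLinearMap.comp_apply, Jy_fst, Jy_snd, inner_zero_left, zero_add]
  rfl

end prod

section main
variable {dx dy : ℕ} (Lx Ly : ℝ) (H : Vec dx → Vec dy → ℝ)

local notation "EE" => WithLp 2 (Vec dx × Vec dy)

lemma Fconv (hconv : ConvexOn ℝ Set.univ (fun p : Vec dx × Vec dy => H p.1 p.2)) :
    ConvexOn ℝ Set.univ (fun p : EE => H p.ofLp.1 p.ofLp.2) := by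
  have := hconv.comp_affineMap
    ((WithLp.prodContinuousLinearEquiv 2 ℝ (Vec dx) (Vec dy)).toLinearEquiv.toLinearMap.toAffineMap)
  exact this

lemma main_i
    (hC2 : ContDiff ℝ 2 (fun p : EE => H p.ofLp.1 p.ofLp.2))
    (hconv : ConvexOn ℝ Set.univ (fun p : Vec dx × Vec dy => H p.1 p.2))
    (hxx : ∀ (x : Vec dx) (y : Vec dy) (v : Vec dx),
      ⟪v, fderiv ℝ (fun x' => gradient (fun u => H u y) x') x v⟫_ℝ ≤ Lx * ‖v‖ ^ 2)
    (hyy : ∀ (x : Vec dx) (y : Vec dy) (v : Vec dy),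
      ⟪v, fderiv ℝ (fun y' => gradient (fun u => H x u) y') y v⟫_ℝ ≤ Ly * ‖v‖ ^ 2) :
    ∀ (p v : EE),
      ⟪v, fderiv ℝ (gradient (fun q : EE => H q.ofLp.1 q.ofLp.2)) p v⟫_ℝ
        ≤ 2 * (Lx * ‖v.ofLp.1‖ ^ 2 + Ly * ‖v.ofLp.2‖ ^ 2) := by
  intro p v
  set F := fun q : EE => H q.ofLp.1 q.ofLp.2 with hF'
  set M := fderiv ℝ (gradient F) p with hM
  set u := Jx dx dy v.ofLp.1 with hu'
  set w := Jy dx dy v.ofLp.2 with hw'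
  have hFconv : ConvexOn ℝ Set.univ F := Fconv H hconv
  have hpsd : ∀ z : EE, 0 ≤ ⟪z, M z⟫_ℝ := fun z => hess_psd hC2 hFconv p z
  have hu : ⟪u, M u⟫_ℝ ≤ Lx * ‖v.ofLp.1‖ ^ 2 := by
    have h := hxx p.ofLp.1 p.ofLp.2 v.ofLp.1
    rw [hess_fst H hC2 p.ofLp.1 p.ofLp.2 v.ofLp.1] at h
    exact h
  have hw : ⟪w, M w⟫_ℝ ≤ Ly * ‖v.ofLp.2‖ ^ 2 := by
    have h := hyy p.ofLp.1 p.ofLp.2 v.ofLp.2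
    rw [hess_snd H hC2 p.ofLp.1 p.ofLp.2 v.ofLp.2] at h
    exact h
  have hexp : ⟪v, M v⟫_ℝ = ⟪u, M u⟫_ℝ + ⟪u, M w⟫_ℝ + ⟪w, M u⟫_ℝ + ⟪w, M w⟫_ℝ := by
    conv_lhs => rw [← Jx_add_Jy v]
    rw [map_add, inner_add_left, inner_add_right, inner_add_right]
    ring
  have hneg : 0 ≤ ⟪u, M u⟫_ℝ - ⟪u, M w⟫_ℝ - ⟪w, M u⟫_ℝ + ⟪w, M w⟫_ℝ := by
    have := hpsd (u - w)
    rw [map_sub, inner_sub_left, inner_sub_right, inner_sub_right] at this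
    linarith
  linarith


lemma main_ii (hLx : 0 < Lx) (hLy : 0 < Ly)
    (hC2 : ContDiff ℝ 2 (fun p : EE => H p.ofLp.1 p.ofLp.2))
    (hconv : ConvexOn ℝ Set.univ (fun p : Vec dx × Vec dy => H p.1 p.2))
    (hxx : ∀ (x : Vec dx) (y : Vec dy) (v : Vec dx),
      ⟪v, fderiv ℝ (fun x' => gradient (fun u => H u y) x') x v⟫_ℝ ≤ Lx * ‖v‖ ^ 2)
    (hyy : ∀ (x : Vec dx) (y : Vec dy) (v : Vec dy),
      ⟪v, fderiv ℝ (fun y' => gradient (fun u => H x u) y') y v⟫_ℝ ≤ Ly * ‖v‖ ^ 2) :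
    ∀ (x x' : Vec dx) (y y' : Vec dy),
        1 / (4 * Lx) * ‖gradient (fun u => H u y) x - gradient (fun u => H u y') x'‖ ^ 2
          + 1 / (4 * Ly) * ‖gradient (fun u => H x u) y - gradient (fun u => H x' u) y'‖ ^ 2
        ≤ H x y - H x' y'
          - ⟪gradient (fun q : EE => H q.ofLp.1 q.ofLp.2)
                ((WithLp.equiv 2 _).symm (x', y')),
              (WithLp.equiv 2 _).symm (x, y) - (WithLp.equiv 2 _).symm (x', y')⟫_ℝ := by
  intro x x' y y'
  set F := fun q : EE => H q.ofLp.1 q.ofLp.2 with hF'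
  have hdiffF : Differentiable ℝ F := hC2.differentiable (by norm_num)
  have hFconv : ConvexOn ℝ Set.univ F := Fconv H hconv
  set p : EE := (WithLp.equiv 2 (Vec dx × Vec dy)).symm (x, y) with hp
  set p' : EE := (WithLp.equiv 2 (Vec dx × Vec dy)).symm (x', y') with hp'
  set g : EE := gradient F p' with hg
  set a : EE := gradient F p with ha
  set φ : EE → ℝ := fun z => F z - ⟪g, z⟫_ℝ with hφ'
  have hlin : ContDiff ℝ 2 (fun z : EE => ⟪g, z⟫_ℝ) := (innerSL ℝ g).contDiff
  have hφC2 : ContDiff ℝ 2 φ := hC2.sub hlin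
  have hφdiff : Differentiable ℝ φ := hφC2.differentiable (by norm_num)
  have hφconv : ConvexOn ℝ Set.univ φ := by
    refine ⟨convex_univ, ?_⟩
    intro u _ v _ s t hs ht hst
    have h1 := hFconv.2 (Set.mem_univ u) (Set.mem_univ v) hs ht hst
    simp only [smul_eq_mul] at h1 ⊢
    have h2 : ⟪g, s • u + t • v⟫_ℝ = s * ⟪g, u⟫_ℝ + t * ⟪g, v⟫_ℝ := by
      rw [inner_add_right, real_inner_smul_right, real_inner_smul_right]
    simp only [hφ', h2]
    linarith
  have hgradφ : gradient φ = fun z => gradient F z - g := by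
    funext z
    apply ext_inner_right ℝ
    intro v
    have hd : HasFDerivAt φ (fderiv ℝ F z - innerSL ℝ g) z :=
      (hdiffF z).hasFDerivAt.sub ((innerSL ℝ g).hasFDerivAt)
    have i1 : ContinuousSMul ℝ EE := IsBoundedSMul.continuousSMul
    rw [grad_inner, hd.fderiv, ContinuousLinearMap.sub_apply, inner_sub_left, grad_inner]
    simp
  have hgradφp' : gradient φ p' = 0 := by rw [hgradφ]; simp [hg]
  have hmin : ∀ z, φ p' ≤ φ z := fun z => min_of_grad_zero hφdiff hφconv hgradφp' z
  -- the step vector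
  set g1 : Vec dx := a.ofLp.1 - g.ofLp.1 with hg1
  set g2 : Vec dy := a.ofLp.2 - g.ofLp.2 with hg2
  set w : EE := (WithLp.equiv 2 (Vec dx × Vec dy)).symm
      (-((2 * Lx)⁻¹ • g1), -((2 * Ly)⁻¹ • g2)) with hw
  have hw1 : w.ofLp.1 = -((2 * Lx)⁻¹ • g1) := rfl
  have hw2 : w.ofLp.2 = -((2 * Ly)⁻¹ • g2) := rfl
  set C : ℝ := 2 * (Lx * ‖w.ofLp.1‖ ^ 2 + Ly * ‖w.ofLp.2‖ ^ 2) with hC'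
  have hghess : ∀ q : EE, fderiv ℝ (gradient φ) q = fderiv ℝ (gradient F) q := by
    intro q
    rw [hgradφ]
    exact fderiv_sub_const g
  have hCbd : ∀ t ∈ Set.Icc (0:ℝ) 1, ⟪w, fderiv ℝ (gradient φ) (p + t • w) w⟫_ℝ ≤ C := by
    intro t _
    rw [hghess]
    exact main_i Lx Ly H hC2 hconv hxx hyy (p + t • w) w
  have hdesc := descent_lemma hφC2 p w C hCbd
  have hchain := (hmin (p + w)).trans hdesc
  -- compute the inner product term
  have hgradφp : gradient φ p = a - g := by rw [hgradφ]
  have hinner : ⟪gradient φ p, w⟫_ℝ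
      = -((2 * Lx)⁻¹ * ‖g1‖ ^ 2) - (2 * Ly)⁻¹ * ‖g2‖ ^ 2 := by
    rw [hgradφp, WithLp.prod_inner_apply]
    have h1 : (a - g).ofLp.1 = g1 := rfl
    have h2 : (a - g).ofLp.2 = g2 := rfl
    rw [h1, h2, hw1, hw2, inner_neg_right, inner_neg_right,
      real_inner_smul_right, real_inner_smul_right,
      real_inner_self_eq_norm_sq, real_inner_self_eq_norm_sq]
    ring
  have hnw1 : ‖w.ofLp.1‖ ^ 2 = (2 * Lx)⁻¹ ^ 2 * ‖g1‖ ^ 2 := by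
    rw [hw1, norm_neg, norm_smul]
    rw [Real.norm_eq_abs, abs_of_pos (by positivity)]
    ring
  have hnw2 : ‖w.ofLp.2‖ ^ 2 = (2 * Ly)⁻¹ ^ 2 * ‖g2‖ ^ 2 := by
    rw [hw2, norm_neg, norm_smul]
    rw [Real.norm_eq_abs, abs_of_pos (by positivity)]
    ring
  -- identify the goal gradients
  have hgone : gradient (fun u => H u y) x - gradient (fun u => H u y') x' = g1 := by
    rw [grad_fst H hdiffF x y, grad_fst H hdiffF x' y']
  have hgtwo : gradient (fun u => H x u) y - gradient (fun u => H x' u) y' = g2 := by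
    rw [grad_snd H hdiffF x y, grad_snd H hdiffF x' y']
  have hφsub : φ p - φ p' = H x y - H x' y' - ⟪g, p - p'⟫_ℝ := by
    simp only [hφ']
    rw [show F p = H x y from rfl, show F p' = H x' y' from rfl, inner_sub_right]
    ring
  rw [hgone, hgtwo]
  have hfinal : φ p' ≤ φ p - (2 * Lx)⁻¹ * ‖g1‖ ^ 2 - (2 * Ly)⁻¹ * ‖g2‖ ^ 2 + C / 2 := by
    rw [hinner] at hchain
    linarith
  rw [hC', hnw1, hnw2] at hfinal
  have hLx' : Lx ≠ 0 := ne_of_gt hLx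
  have hLy' : Ly ≠ 0 := ne_of_gt hLy
  have : 1 / (4 * Lx) * ‖g1‖ ^ 2 + 1 / (4 * Ly) * ‖g2‖ ^ 2 ≤ φ p - φ p' := by
    have e1 : 2 * (Lx * ((2 * Lx)⁻¹ ^ 2 * ‖g1‖ ^ 2) + Ly * ((2 * Ly)⁻¹ ^ 2 * ‖g2‖ ^ 2)) / 2
        = 1 / (4 * Lx) * ‖g1‖ ^ 2 + 1 / (4 * Ly) * ‖g2‖ ^ 2 := by
      field_simp
      ring
    have e2 : (2 * Lx)⁻¹ * ‖g1‖ ^ 2 = 2 * (1 / (4 * Lx) * ‖g1‖ ^ 2) := by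
      field_simp; ring
    have e3 : (2 * Ly)⁻¹ * ‖g2‖ ^ 2 = 2 * (1 / (4 * Ly) * ‖g2‖ ^ 2) := by
      field_simp; ring
    rw [e1, e2, e3] at hfinal
    linarith
  rw [hφsub] at this
  exact this

end main

/-- Lemma 16 of the paper.  Let `H` be `C²` and jointly convex on
`ℝ^{d_x} × ℝ^{d_y}` with diagonal Hessian blocks `∇²_{xx}H ⪯ L_x I` and `∇²_{yy}H ⪯ L_y I`.
Then (i) the full Hessian satisfies `∇²H ⪯ 2 diag(L_x I, L_y I)`, and (ii) the Bregman
divergence of `H` dominates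
`(1/(4L_x))‖∇_x H(x,y) − ∇_x H(x',y')‖² + (1/(4L_y))‖∇_y H(x,y) − ∇_y H(x',y')‖²`.
Positive semidefiniteness `A ⪯ B` is expressed via quadratic forms, the full Hessian of the
joint function on `WithLp 2 (ℝ^{d_x} × ℝ^{d_y})` being the derivative of its gradient. -/
theorem stmt19_hessian_block_bound
    (dx dy : ℕ) (Lx Ly : ℝ) (hLx : 0 < Lx) (hLy : 0 < Ly)
    (H : Vec dx → Vec dy → ℝ)
    (hC2 : ContDiff ℝ 2 (fun p : WithLp 2 (Vec dx × Vec dy) => H p.ofLp.1 p.ofLp.2))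
    (hconv : ConvexOn ℝ Set.univ (fun p : Vec dx × Vec dy => H p.1 p.2))
    -- ∇²_{xx} H(x,y) ⪯ Lx • I
    (hxx : ∀ (x : Vec dx) (y : Vec dy) (v : Vec dx),
      ⟪v, fderiv ℝ (fun x' => gradient (fun u => H u y) x') x v⟫_ℝ ≤ Lx * ‖v‖ ^ 2)
    -- ∇²_{yy} H(x,y) ⪯ Ly • I
    (hyy : ∀ (x : Vec dx) (y : Vec dy) (v : Vec dy),
      ⟪v, fderiv ℝ (fun y' => gradient (fun u => H x u) y') y v⟫_ℝ ≤ Ly * ‖v‖ ^ 2) :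
    -- (i) ∇²H(x,y) ⪯ 2 diag(Lx I, Ly I)
    (∀ (p v : WithLp 2 (Vec dx × Vec dy)),
      ⟪v, fderiv ℝ (gradient (fun q : WithLp 2 (Vec dx × Vec dy) => H q.ofLp.1 q.ofLp.2)) p v⟫_ℝ
        ≤ 2 * (Lx * ‖v.ofLp.1‖ ^ 2 + Ly * ‖v.ofLp.2‖ ^ 2))
    -- (ii) the Bregman divergence lower bound
    ∧ (∀ (x x' : Vec dx) (y y' : Vec dy),
        1 / (4 * Lx) * ‖gradient (fun u => H u y) x - gradient (fun u => H u y') x'‖ ^ 2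
          + 1 / (4 * Ly) * ‖gradient (fun u => H x u) y - gradient (fun u => H x' u) y'‖ ^ 2
        ≤ H x y - H x' y'
          - ⟪gradient (fun q : WithLp 2 (Vec dx × Vec dy) => H q.ofLp.1 q.ofLp.2)
                ((WithLp.equiv 2 _).symm (x', y')),
              (WithLp.equiv 2 _).symm (x, y) - (WithLp.equiv 2 _).symm (x', y')⟫_ℝ) :=
  ⟨main_i Lx Ly H hC2 hconv hxx hyy, main_ii Lx Ly H hLx hLy hC2 hconv hxx hyy⟩
end
end
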